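/- arXiv:1204.1086 — 2 statements merged into one kernel-verified Lean document; each statement's English description precedes it below -/
import Mathlib

section
/- Let s ≥ 3 and let γ : ℕ → ℕ be a nondecreasing function such that λ_{s−2}(n) ≤ γ(n)·n for all n ≥ 1. Then for all n ≥ 1: λ_s(n) ≤ γ(n)·λ_s(n, 2n−1). -/
/-- Alternating list `a b a b ⋯` of the given length. -/
def altList : ℕ → ℕ → ℕ → List ℕ
  | 0, _, _ => []
  | (k+1), a, b => a :: altList k b a

/-- An order-`s` Davenport–Schinzel sequence: it contains no (not necessarily
contiguous) subsequence `a b a b ⋯` of length `s+2` over two distinct symbols. -/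
def IsDS (s : ℕ) (S : List ℕ) : Prop :=
  ∀ a b : ℕ, a ≠ b → ¬ (altList (s + 2) a b).Sublist S

/-- 2-sparse: no two equal adjacent symbols. -/
def Sparse2 (S : List ℕ) : Prop := S.Chain' (· ≠ ·)

/-- `S` can be partitioned into at most `m` blocks
(contiguous runs of pairwise distinct symbols). -/
def Blocked (m : ℕ) (S : List ℕ) : Prop :=
  ∃ Bs : List (List ℕ), Bs.length ≤ m ∧ (∀ B ∈ Bs, B.Nodup) ∧ S = Bs.flatten

/-- `λ_s(n)`: maximum length of a 2-sparse order-`s` DS sequence over an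
alphabet of `n` symbols. -/
noncomputable def lamS (s n : ℕ) : ℕ :=
  sSup {l : ℕ | ∃ S : List ℕ, IsDS s S ∧ Sparse2 S ∧ S.toFinset.card ≤ n ∧ S.length = l}

/-- `λ_s(n,m)`: maximum length of an order-`s` DS sequence over an alphabet of
`n` symbols that can be partitioned into at most `m` blocks. -/
noncomputable def lamB (s n m : ℕ) : ℕ :=
  sSup {l : ℕ | ∃ S : List ℕ, IsDS s S ∧ S.toFinset.card ≤ n ∧ Blocked m S ∧ S.length = l}


open List

/-- the element that would come at index `k` (0-based) in `altList _ a b`. -/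
def altEnd (k : ℕ) (a b : ℕ) : ℕ := if k % 2 = 0 then a else b

lemma altList_length (k a b : ℕ) : (altList k a b).length = k := by
  induction k generalizing a b with
  | zero => rfl
  | succ k ih => simp [altList, ih]

lemma altEnd_succ (k a b : ℕ) : altEnd (k+1) a b = altEnd k b a := by
  rcases Nat.even_or_odd k with hk | hk
  · have h1 : k % 2 = 0 := Nat.even_iff.mp hk
    simp [altEnd, h1, Nat.succ_mod_two_eq_one_iff.mpr h1]
  · have h1 : k % 2 = 1 := Nat.odd_iff.mp hk
    simp [altEnd, h1, Nat.succ_mod_two_eq_zero_iff.mpr h1]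

lemma altList_concat (k a b : ℕ) :
    altList (k+1) a b = altList k a b ++ [altEnd k a b] := by
  induction k generalizing a b with
  | zero => rfl
  | succ k ih =>
    show a :: altList (k+1) b a = (a :: altList k b a) ++ _
    rw [ih, altEnd_succ]; rfl

lemma altList_getLast? (k a b : ℕ) :
    (altList (k+1) a b).getLast? = some (altEnd k a b) := by
  rw [altList_concat]; exact List.getLast?_concat

lemma mem_altList (k a b : ℕ) : a ∈ altList (k+2) a b ∧ b ∈ altList (k+2) a b := by
  constructor
  · show a ∈ a :: _; simp
  · show b ∈ a :: b :: _; simp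

lemma altList_sublist_altList {k m : ℕ} (h : k ≤ m) (a b : ℕ) :
    altList k a b <+ altList m a b := by
  induction k generalizing a b m with
  | zero => exact List.nil_sublist _
  | succ k ih =>
    obtain ⟨m', rfl⟩ := Nat.exists_eq_add_of_le h
    have h2 : a :: altList k b a <+ a :: altList (k + m') b a :=
      List.Sublist.cons₂ a (ih (Nat.le_add_right _ _) b a)
    have e : k + 1 + m' = (k + m') + 1 := by omega
    rw [e]; exact h2

lemma sublist_of_cons_sublist_cons_ne {a c : ℕ} {l m : List ℕ}
    (h : (a :: l) <+ (c :: m)) (hne : a ≠ c) : (a :: l) <+ m := by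
  cases h with
  | cons _ h => exact h
  | cons_cons _ h => exact absurd rfl hne

lemma sublist_of_sublist_concat_ne {z w : ℕ} {l m : List ℕ}
    (hl : l.getLast? = some z) (hne : z ≠ w) (h : l <+ m ++ [w]) : l <+ m := by
  have hr : l.reverse <+ w :: m.reverse := by simpa using h.reverse
  rw [← List.head?_reverse] at hl
  obtain ⟨l', hl'⟩ : ∃ l', l.reverse = z :: l' := by
    cases hrev : l.reverse with
    | nil => rw [hrev] at hl; simp at hl
    | cons x t => rw [hrev] at hl; simp at hl; exact ⟨t, by rw [hl]⟩
  rw [hl'] at hr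
  have h2 := sublist_of_cons_sublist_cons_ne hr hne
  have h3 : l.reverse <+ m.reverse := by rw [hl']; exact h2
  simpa using h3.reverse

lemma IsDS.sublist {s : ℕ} {S T : List ℕ} (h : IsDS s S) (hts : T <+ S) : IsDS s T :=
  fun a b hab hsub => h a b hab (hsub.trans hts)

lemma isDS_nil (s : ℕ) : IsDS s [] := by
  intro a b hab hsub
  have := List.sublist_nil.mp hsub
  have := congrArg List.length this
  simp [altList_length] at this

lemma altEnd_mem (k a b : ℕ) : altEnd k a b = a ∨ altEnd k a b = b := by
  unfold altEnd; split <;> simp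

lemma altEnd_ne (k a b : ℕ) (hab : a ≠ b) : altEnd k a b ≠ altEnd (k+1) a b := by
  rw [altEnd_succ]; unfold altEnd; split <;> simp [hab, hab.symm]

/-- The interval extension lemma. -/
lemma isDS_interval (t : ℕ) (A I B : List ℕ)
    (hA : ∀ y ∈ I, y ∉ A → I.head? = some y)
    (hB : ∀ y ∈ I, y ∉ B → I.getLast? = some y)
    (hW : IsDS (t + 2) (A ++ I ++ B)) : IsDS t I := by
  intro a b hab hsub
  have haI : a ∈ I := hsub.subset (mem_altList t a b).1
  have hbI : b ∈ I := hsub.subset (mem_altList t a b).2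
  -- step 1 : extend left
  have h1 : altList (t + 3) b a <+ A ++ I := by
    by_cases hbA : b ∈ A
    · have := List.Sublist.append (List.singleton_sublist.mpr hbA) hsub
      exact this
    · have hhead := hA b hbI hbA
      obtain ⟨I', rfl⟩ : ∃ I', I = b :: I' := by
        cases I with
        | nil => simp at hhead
        | cons x I' => simp at hhead; exact ⟨I', by rw [hhead]⟩
      have h2 : altList (t + 2) a b <+ I' := by
        have : a :: altList (t+1) b a <+ b :: I' := hsub
        exact sublist_of_cons_sublist_cons_ne this hab
      have h3 : altList (t + 3) b a <+ b :: I' := List.Sublist.cons₂ b h2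
      exact h3.trans (List.sublist_append_right A _)
  -- step 2 : extend right
  set z := altEnd (t + 2) b a with hz
  set w := altEnd (t + 3) b a with hw
  have hzw : z ≠ w := altEnd_ne (t+2) b a hab.symm
  have hwI : w ∈ I := by rcases altEnd_mem (t+3) b a with h | h <;> rw [hw, h] <;> assumption
  have hlast : (altList (t + 3) b a).getLast? = some z := altList_getLast? (t+2) b a
  have hfin : altList (t + 4) b a <+ A ++ I ++ B := by
    by_cases hwB : w ∈ B
    · have := List.Sublist.append h1 (List.singleton_sublist.mpr hwB)
      rw [← altList_concat] at this
      exact this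
    · have hlastI := hB w hwI hwB
      obtain ⟨I'', rfl⟩ : ∃ I'', I = I'' ++ [w] := by
        refine ⟨I.dropLast, ?_⟩
        have hne : I ≠ [] := by rintro rfl; simp at hwI
        conv_lhs => rw [← List.dropLast_append_getLast hne]
        rw [List.getLast?_eq_getLast hne] at hlastI
        simp at hlastI
        rw [hlastI]
      have h4 : altList (t + 3) b a <+ (A ++ I'') ++ [w] := by
        rw [List.append_assoc]; exact h1
      have h5 := sublist_of_sublist_concat_ne hlast hzw h4
      have h6 : altList (t + 3) b a ++ [w] <+ (A ++ I'') ++ [w] :=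
        List.Sublist.append h5 (List.Sublist.refl _)
      rw [← altList_concat] at h6
      rw [List.append_assoc] at h6
      exact h6.trans (List.sublist_append_left _ _)
  exact hW b a hab.symm hfin

/-- Cut condition: index `i` is a valid cutting point of `S` (given preceding prefix `P`). -/
def cutCond (P S : List ℕ) (i : ℕ) : Prop :=
  S.length ≤ i ∨ (1 ≤ i ∧ (S.getD i 0 ∉ P ++ S.take i ∨ S.getD (i-1) 0 ∉ S.drop i))

instance cutCond.dec (P S : List ℕ) : DecidablePred (cutCond P S) := by
  intro i; unfold cutCond; infer_instance

lemma cutCond_exists (P S : List ℕ) : ∃ i, cutCond P S i := ⟨S.length, Or.inl le_rfl⟩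

/-- First cut point of `S`. -/
def firstCut (P S : List ℕ) : ℕ := Nat.find (cutCond_exists P S)

lemma firstCut_le (P S : List ℕ) : firstCut P S ≤ S.length :=
  Nat.find_le (Or.inl le_rfl)

lemma firstCut_pos (P S : List ℕ) (h : S ≠ []) : 1 ≤ firstCut P S := by
  have hlen : 0 < S.length := List.length_pos_iff.mpr h
  have : ¬ cutCond P S 0 := by unfold cutCond; push_neg; omega
  exact (Nat.find_pos _).mpr this

lemma firstCut_min (P S : List ℕ) {i : ℕ} (h : i < firstCut P S) : ¬ cutCond P S i :=
  Nat.find_min _ h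

/-- Decomposition of `S` into intervals with no interior cut points. -/
def chop (P S : List ℕ) : List (List ℕ) :=
  if h : S = [] then [] else
    have hlt : (S.drop (firstCut P S)).length < S.length := by
      have h1 := firstCut_pos P S h
      have h2 : 0 < S.length := List.length_pos_iff.mpr h
      simp only [List.length_drop]; omega
    S.take (firstCut P S) :: chop (P ++ S.take (firstCut P S)) (S.drop (firstCut P S))
termination_by S.length
decreasing_by exact hlt

lemma chop_flatten (S P : List ℕ) : (chop P S).flatten = S := by
  by_cases h : S = []
  · rw [chop.eq_def]; simp [h]
  · have h1 := firstCut_pos P S h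
    have h2 : 0 < S.length := List.length_pos_iff.mpr h
    have hlt : (S.drop (firstCut P S)).length < S.length := by
      simp only [List.length_drop]; omega
    rw [chop.eq_def]; simp only [h, dite_false, List.flatten_cons]
    rw [chop_flatten (S.drop (firstCut P S)) (P ++ S.take (firstCut P S))]
    exact List.take_append_drop _ _
termination_by S.length

lemma chop_ne_nil (S P : List ℕ) : ∀ I ∈ chop P S, I ≠ [] := by
  by_cases h : S = []
  · rw [chop.eq_def]; simp [h]
  · have h1 := firstCut_pos P S h
    have h2 : 0 < S.length := List.length_pos_iff.mpr h
    have hlt : (S.drop (firstCut P S)).length < S.length := by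
      simp only [List.length_drop]; omega
    rw [chop.eq_def]; simp only [h, dite_false, List.mem_cons]
    rintro I (rfl | hI)
    · intro hc
      have := congrArg List.length hc
      simp only [List.length_take, List.length_nil] at this
      omega
    · exact chop_ne_nil _ _ I hI
termination_by S.length

lemma getD_take_eq {S : List ℕ} {c j : ℕ} (hj : j < c) (hjlen : j < S.length)
    {y : ℕ} (hy : (S.take c)[j]'(by rw [List.length_take]; omega) = y) :
    S.getD j 0 = y := by
  rw [List.getD_eq_getElem _ _ hjlen, ← hy]
  exact (List.getElem_take).symm

lemma head_propA (P S : List ℕ) (h : S ≠ []) :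
    ∀ y ∈ S.take (firstCut P S), y ∉ P → (S.take (firstCut P S)).head? = some y := by
  intro y hy hyP
  set c := firstCut P S with hc
  have hc1 : 1 ≤ c := firstCut_pos P S h
  have hclen : c ≤ S.length := firstCut_le P S
  obtain ⟨j, hj, hjy⟩ := List.getElem_of_mem hy
  have hj' : j < (S.take c).length := hj
  rw [List.length_take] at hj'
  have hjc : j < c := lt_of_lt_of_le hj' (min_le_left _ _)
  have hjlen : j < S.length := lt_of_lt_of_le hj' (min_le_right _ _)
  have hjy' : S.getD j 0 = y := getD_take_eq hjc hjlen hjy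
  have hex : ∃ k, S.getD k 0 = y := ⟨j, hjy'⟩
  have hiy : S.getD (Nat.find hex) 0 = y := Nat.find_spec hex
  set i := Nat.find hex with hidef
  have hij : i ≤ j := Nat.find_le hjy'
  have hic : i < c := lt_of_le_of_lt hij hjc
  by_cases hi0 : i = 0
  · obtain ⟨x, S₀, rfl⟩ := List.exists_cons_of_ne_nil h
    have hyx : y = x := by rw [hi0] at hiy; simpa using hiy.symm
    obtain ⟨c', hc'⟩ : ∃ c', c = c' + 1 := ⟨c - 1, by omega⟩
    rw [hc', List.take_succ_cons]
    simp [hyx]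
  · have hncut := firstCut_min P S hic
    unfold cutCond at hncut
    push_neg at hncut
    have hmem : y ∈ P ++ S.take i := by
      rw [← hiy]; exact (hncut.2 (by omega)).1
    rw [List.mem_append] at hmem
    rcases hmem with hp | ht
    · exact absurd hp hyP
    · obtain ⟨j', hj2, hj2y⟩ := List.getElem_of_mem ht
      have hj2' : j' < (S.take i).length := hj2
      rw [List.length_take] at hj2'
      have hji : j' < i := lt_of_lt_of_le hj2' (min_le_left _ _)
      have hjlen2 : j' < S.length := lt_of_lt_of_le hj2' (min_le_right _ _)
      exact absurd (getD_take_eq hji hjlen2 hj2y) (Nat.find_min hex hji)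

lemma head_propB (P S : List ℕ) (h : S ≠ []) :
    ∀ y ∈ S.take (firstCut P S), y ∉ S.drop (firstCut P S) →
      (S.take (firstCut P S)).getLast? = some y := by
  intro y hy hyD
  set c := firstCut P S with hc
  have hc1 : 1 ≤ c := firstCut_pos P S h
  have hclen : c ≤ S.length := firstCut_le P S
  obtain ⟨j, hj, hjy⟩ := List.getElem_of_mem hy
  have hj' : j < (S.take c).length := hj
  rw [List.length_take] at hj'
  have hjc : j < c := lt_of_lt_of_le hj' (min_le_left _ _)
  have hjlen : j < S.length := lt_of_lt_of_le hj' (min_le_right _ _)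
  have hjy' : S.getD j 0 = y := getD_take_eq hjc hjlen hjy
  -- maximal index via Nat.find on reversed offset
  have hex : ∃ k, S.getD (c - 1 - k) 0 = y := ⟨c - 1 - j, by
    have : c - 1 - (c - 1 - j) = j := by omega
    rw [this]; exact hjy'⟩
  have hky : S.getD (c - 1 - Nat.find hex) 0 = y := Nat.find_spec hex
  set k₀ := Nat.find hex with hk₀
  set i := c - 1 - k₀ with hi
  have hiy : S.getD i 0 = y := hky
  have hic : i < c := by omega
  have hmax : ∀ j', i < j' → j' < c → S.getD j' 0 ≠ y := by
    intro j' h1 h2 hval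
    have hk' : c - 1 - j' < k₀ := by omega
    have := Nat.find_min hex hk'
    rw [show c - 1 - (c - 1 - j') = j' by omega] at this
    exact this hval
  by_cases hil : i = c - 1
  · have hlen : (S.take c).length = c := by rw [List.length_take]; omega
    rw [List.getLast?_eq_getElem?, hlen]
    rw [List.getElem?_eq_getElem (by rw [hlen]; omega)]
    congr 1
    have h1 : (S.take c)[c-1]'(by rw [hlen]; omega) = S[c-1]'(by omega) :=
      List.getElem_take
    rw [h1, ← List.getD_eq_getElem _ 0 (by omega : c - 1 < S.length)]
    rw [← hil]; exact hiy
  · -- i + 1 < c, use non-cut at i+1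
    have hncut := firstCut_min P S (show i + 1 < c by omega)
    unfold cutCond at hncut
    push_neg at hncut
    have hD2 : S.getD i 0 ∈ S.drop (i+1) := by
      have := (hncut.2 (by omega)).2
      simpa using this
    rw [hiy] at hD2
    -- split drop (i+1) at c
    have hdd : List.drop (c - (i+1)) (S.drop (i+1)) = S.drop c := by
      rw [List.drop_drop]; congr 1; omega
    have hsplit := List.take_append_drop (c - (i+1)) (S.drop (i+1))
    rw [hdd] at hsplit
    rw [← hsplit, List.mem_append] at hD2
    rcases hD2 with hmem | hmem
    · obtain ⟨j', hj2, hj2y⟩ := List.getElem_of_mem hmem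
      have hj2' : j' < ((S.drop (i+1)).take (c - (i+1))).length := hj2
      rw [List.length_take, List.length_drop] at hj2'
      have hjc2 : j' < c - (i+1) := lt_of_lt_of_le hj2' (min_le_left _ _)
      have hjlen2 : j' < S.length - (i+1) := lt_of_lt_of_le hj2' (min_le_right _ _)
      have hval : S.getD (i+1+j') 0 = y := by
        have e1 : ((S.drop (i+1)).take (c - (i+1)))[j']'hj2
            = (S.drop (i+1))[j']'(by rw [List.length_drop]; omega) := List.getElem_take
        have e2 : (S.drop (i+1))[j']'(by rw [List.length_drop]; omega)
            = S[i+1+j']'(by omega) := List.getElem_drop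
        rw [List.getD_eq_getElem _ 0 (by omega : i+1+j' < S.length), ← e2, ← e1, hj2y]
      exact absurd hval (hmax (i+1+j') (by omega) (by omega))
    · exact absurd hmem hyD

lemma headD_eq_getD (l : List ℕ) : l.headD 0 = l.getD 0 0 := by cases l <;> rfl

lemma chop_struct (S P : List ℕ) : ∀ I ∈ chop P S, ∃ A B : List ℕ,
    A ++ (I ++ B) = P ++ S ∧ (∀ y ∈ I, y ∉ A → I.head? = some y) ∧
    (∀ y ∈ I, y ∉ B → I.getLast? = some y) := by
  by_cases h : S = []
  · rw [chop.eq_def]; simp [h]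
  · have h1 := firstCut_pos P S h
    have h2 : 0 < S.length := List.length_pos_iff.mpr h
    have hlt : (S.drop (firstCut P S)).length < S.length := by
      simp only [List.length_drop]; omega
    rw [chop.eq_def]; simp only [h, dite_false, List.mem_cons]
    rintro I (rfl | hI)
    · exact ⟨P, S.drop (firstCut P S),
        by rw [List.take_append_drop], head_propA P S h, head_propB P S h⟩
    · obtain ⟨A, B, hAB, p1, p2⟩ :=
        chop_struct (S.drop (firstCut P S)) (P ++ S.take (firstCut P S)) I hI
      refine ⟨A, B, ?_, p1, p2⟩
      rw [hAB, List.append_assoc, List.take_append_drop]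
termination_by S.length

lemma toFinset_drop_subset (S : List ℕ) (c : ℕ) :
    (S.drop c).toFinset ⊆ S.toFinset := by
  intro x hx
  rw [List.mem_toFinset] at hx ⊢
  exact (List.drop_sublist c S).subset hx

lemma headD_mem_take (S : List ℕ) (h : S ≠ []) {c : ℕ} (hc : 1 ≤ c) :
    S.headD 0 ∈ (S.take c).toFinset := by
  obtain ⟨x, S₀, rfl⟩ := List.exists_cons_of_ne_nil h
  obtain ⟨c', rfl⟩ : ∃ c', c = c' + 1 := ⟨c - 1, by omega⟩
  rw [List.take_succ_cons]
  simp

lemma chop_count (S P : List ℕ) (h : S ≠ []) :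
    (chop P S).length ≤
      (S.toFinset \ insert (S.headD 0) P.toFinset).card + S.toFinset.card := by
  classical
  have h1 := firstCut_pos P S h
  have h2 : 0 < S.length := List.length_pos_iff.mpr h
  have hlt : (S.drop (firstCut P S)).length < S.length := by
    simp only [List.length_drop]; omega
  rw [chop.eq_def]; simp only [h, dite_false, List.length_cons]
  set c := firstCut P S with hc
  by_cases h' : S.drop c = []
  · rw [chop.eq_def]; simp only [h', dite_true, List.length_nil]
    have hmem : S.headD 0 ∈ S.toFinset := by
      obtain ⟨x, S₀, rfl⟩ := List.exists_cons_of_ne_nil h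
      simp
    have : 1 ≤ S.toFinset.card := Finset.card_pos.mpr ⟨_, hmem⟩
    omega
  · have hrec := chop_count (S.drop c) (P ++ S.take c) h'
    have hclt : c < S.length := by
      have := List.length_drop (i := c) (l := S)
      have : 0 < (S.drop c).length := List.length_pos_iff.mpr h'
      simp only [List.length_drop] at this; omega
    have hcut : cutCond P S c := Nat.find_spec (cutCond_exists P S)
    unfold cutCond at hcut
    rcases hcut with hle | ⟨hc1, hD⟩
    · omega
    have hT'T : (S.drop c).toFinset ⊆ S.toFinset := toFinset_drop_subset S c
    have hheadtake : S.headD 0 ∈ (S.take c).toFinset := headD_mem_take S h hc1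
    -- headD of drop
    have hdropne : S.drop c ≠ [] := h'
    have hlen0 : 0 < (S.drop c).length := List.length_pos_iff.mpr hdropne
    have hheadD : (S.drop c).headD 0 = S.getD c 0 := by
      rw [_root_.headD_eq_getD, List.getD_eq_getElem _ 0 hlen0, List.getD_eq_getElem _ 0 hclt]
      have := List.getElem_drop (xs := S) (i := c) (j := 0) (h := hlen0)
      simpa using this
    rcases hD with hD1 | hD2
    · -- fresh symbol case
      set x := S.getD c 0 with hx
      have hxT : x ∈ S.toFinset := by
        rw [List.mem_toFinset, hx, List.getD_eq_getElem _ 0 hclt]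
        exact List.getElem_mem _
      rw [List.mem_append] at hD1
      push_neg at hD1
      have hxf : x ∈ S.toFinset \ insert (S.headD 0) P.toFinset := by
        rw [Finset.mem_sdiff, Finset.mem_insert]
        refine ⟨hxT, ?_⟩
        push_neg
        constructor
        · intro hcontra
          apply hD1.2
          rw [hcontra]
          rw [List.mem_toFinset] at hheadtake
          exact hheadtake
        · exact fun hcmem => hD1.1 (List.mem_toFinset.mp hcmem)
      have hsub : (S.drop c).toFinset \
            insert ((S.drop c).headD 0) (P ++ S.take c).toFinset ⊆
          (S.toFinset \ insert (S.headD 0) P.toFinset).erase x := by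
        intro z hz
        rw [Finset.mem_sdiff, Finset.mem_insert] at hz
        push_neg at hz
        obtain ⟨hzT', hzx, hzP⟩ := hz
        rw [hheadD] at hzx
        rw [List.toFinset_append, Finset.mem_union] at hzP
        push_neg at hzP
        rw [Finset.mem_erase, Finset.mem_sdiff, Finset.mem_insert]
        push_neg
        exact ⟨hzx, hT'T hzT', fun hcontra => absurd (hcontra ▸ hheadtake) hzP.2, hzP.1⟩
      have hcard1 : ((S.drop c).toFinset \
            insert ((S.drop c).headD 0) (P ++ S.take c).toFinset).card
          < (S.toFinset \ insert (S.headD 0) P.toFinset).card :=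
        lt_of_le_of_lt (Finset.card_le_card hsub) (Finset.card_erase_lt_of_mem hxf)
      have hcard2 : (S.drop c).toFinset.card ≤ S.toFinset.card :=
        Finset.card_le_card hT'T
      omega
    · -- dying symbol case
      set y := S.getD (c-1) 0 with hy
      have hyT : y ∈ S.toFinset := by
        rw [List.mem_toFinset, hy, List.getD_eq_getElem _ 0 (by omega : c - 1 < S.length)]
        exact List.getElem_mem _
      have hyD : y ∉ (S.drop c).toFinset := by
        rw [List.mem_toFinset]; exact hD2
      have hsubT : (S.drop c).toFinset ⊆ S.toFinset.erase y := by
        intro z hz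
        rw [Finset.mem_erase]
        exact ⟨fun hcontra => absurd (hcontra ▸ hz) hyD, hT'T hz⟩
      have hcardT : (S.drop c).toFinset.card < S.toFinset.card :=
        lt_of_le_of_lt (Finset.card_le_card hsubT) (Finset.card_erase_lt_of_mem hyT)
      have hsubf : (S.drop c).toFinset \
            insert ((S.drop c).headD 0) (P ++ S.take c).toFinset ⊆
          S.toFinset \ insert (S.headD 0) P.toFinset := by
        intro z hz
        rw [Finset.mem_sdiff, Finset.mem_insert] at hz
        push_neg at hz
        obtain ⟨hzT', hzx, hzP⟩ := hz
        rw [List.toFinset_append, Finset.mem_union] at hzP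
        push_neg at hzP
        rw [Finset.mem_sdiff, Finset.mem_insert]
        push_neg
        exact ⟨hT'T hzT', fun hcontra => absurd (hcontra ▸ hheadtake) hzP.2, hzP.1⟩
      have hcardf := Finset.card_le_card hsubf
      omega
termination_by S.length

lemma alt_from_fiber (u v : ℕ) (S : List ℕ) (huv : u ≠ v) :
    ∀ (K x : ℕ) (F : Finset ℕ), F.card = K →
      (∀ i ∈ F, x ≤ i ∧ i + 1 < S.length ∧ S.getD i 0 = u ∧ S.getD (i+1) 0 = v) →
      altList (2 * K) u v <+ S.drop x := by
  intro K
  induction K with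
  | zero => intro x F _ _; exact List.nil_sublist _
  | succ K ih =>
    intro x F hcard hF
    have hne : F.Nonempty := by rw [← Finset.card_pos, hcard]; omega
    set i := F.min' hne with hi
    have hiF : i ∈ F := F.min'_mem hne
    obtain ⟨hxi, hilen, hiu, hiv⟩ := hF i hiF
    have hrec : altList (2 * K) u v <+ S.drop (i + 2) := by
      apply ih (i+2) (F.erase i) (by rw [Finset.card_erase_of_mem hiF, hcard]; omega)
      intro j hj
      rw [Finset.mem_erase] at hj
      obtain ⟨hji, hjF⟩ := hj
      obtain ⟨_, hjlen, hju, hjv⟩ := hF j hjF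
      refine ⟨?_, hjlen, hju, hjv⟩
      have hij : i ≤ j := F.min'_le j hjF
      have hne2 : j ≠ i + 1 := by
        intro hcontra
        rw [hcontra] at hju
        exact huv (hju.symm.trans hiv)
      omega
    have hdropi : S.drop i = u :: v :: S.drop (i + 2) := by
      rw [List.drop_eq_getElem_cons (by omega : i < S.length)]
      congr 1
      · rw [← List.getD_eq_getElem _ 0 (by omega : i < S.length)]; exact hiu
      rw [List.drop_eq_getElem_cons (by omega : i + 1 < S.length)]
      congr 1
      rw [← List.getD_eq_getElem _ 0 hilen]; exact hiv
    have hsub : altList (2 * (K + 1)) u v <+ S.drop i := by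
      rw [hdropi]
      have e : 2 * (K + 1) = (2 * K) + 1 + 1 := by omega
      rw [e]
      show u :: v :: altList (2 * K) u v <+ u :: v :: S.drop (i + 2)
      exact List.Sublist.cons₂ u (List.Sublist.cons₂ v hrec)
    have hdd : S.drop i = List.drop (i - x) (S.drop x) := by
      rw [List.drop_drop]; congr 1; omega
    refine hsub.trans ?_
    rw [hdd]
    exact (List.drop_suffix _ _).sublist

lemma Sparse2.adj {S : List ℕ} (hsp : Sparse2 S) {i : ℕ} (hi : i + 1 < S.length) :
    S.getD i 0 ≠ S.getD (i+1) 0 := by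
  rw [List.getD_eq_getElem _ 0 (by omega), List.getD_eq_getElem _ 0 hi]
  have := List.isChain_iff_getElem.mp hsp i (by omega)
  simpa using this

lemma length_le_of_sparse_DS (t n : ℕ) (S : List ℕ) (hDS : IsDS t S)
    (hsp : Sparse2 S) (hcard : S.toFinset.card ≤ n) :
    S.length ≤ n * n * t + 1 := by
  classical
  by_contra hcon
  push_neg at hcon
  have hmaps : ∀ i ∈ Finset.range (S.length - 1),
      (S.getD i 0, S.getD (i+1) 0) ∈ S.toFinset ×ˢ S.toFinset := by
    intro i hi
    rw [Finset.mem_range] at hi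
    rw [Finset.mem_product]
    constructor
    · show S.getD i 0 ∈ S.toFinset
      rw [List.mem_toFinset, List.getD_eq_getElem _ 0 (by omega)]
      exact List.getElem_mem _
    · show S.getD (i+1) 0 ∈ S.toFinset
      rw [List.mem_toFinset, List.getD_eq_getElem _ 0 (by omega)]
      exact List.getElem_mem _
  have hltc : (S.toFinset ×ˢ S.toFinset).card * t < (Finset.range (S.length - 1)).card := by
    rw [Finset.card_product, Finset.card_range]
    have : S.toFinset.card * S.toFinset.card * t ≤ n * n * t := by
      apply Nat.mul_le_mul_right
      exact Nat.mul_le_mul hcard hcard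
    omega
  obtain ⟨p, hpT, hfib⟩ :=
    Finset.exists_lt_card_fiber_of_mul_lt_card_of_maps_to hmaps hltc
  obtain ⟨F, hFsub, hFcard⟩ := Finset.exists_subset_card_eq (show t + 1 ≤ _ from hfib)
  have hFprop : ∀ i ∈ F, 0 ≤ i ∧ i + 1 < S.length ∧
      S.getD i 0 = p.1 ∧ S.getD (i+1) 0 = p.2 := by
    intro i hiF
    have := hFsub hiF
    rw [Finset.mem_filter, Finset.mem_range] at this
    obtain ⟨hir, hieq⟩ := this
    have h1 : S.getD i 0 = p.1 := by rw [← hieq]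
    have h2 : S.getD (i+1) 0 = p.2 := by rw [← hieq]
    exact ⟨Nat.zero_le _, by omega, h1, h2⟩
  have hFne : F.Nonempty := by rw [← Finset.card_pos, hFcard]; omega
  obtain ⟨i₀, hi₀⟩ := hFne
  obtain ⟨-, hi₀len, hi₀u, hi₀v⟩ := hFprop i₀ hi₀
  have huv : p.1 ≠ p.2 := by
    rw [← hi₀u, ← hi₀v]
    exact hsp.adj hi₀len
  have halt := alt_from_fiber p.1 p.2 S huv (t+1) 0 F hFcard hFprop
  rw [List.drop_zero] at halt
  have hsubl : altList (t + 2) p.1 p.2 <+ S :=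
    (altList_sublist_altList (by omega : t + 2 ≤ 2 * (t + 1)) p.1 p.2).trans halt
  exact hDS p.1 p.2 huv hsubl

lemma bddAbove_lamS_set (t n : ℕ) :
    BddAbove {l : ℕ | ∃ S : List ℕ, IsDS t S ∧ Sparse2 S ∧ S.toFinset.card ≤ n ∧ S.length = l} := by
  refine ⟨n * n * t + 1, ?_⟩
  rintro l ⟨S, hDS, hsp, hcard, rfl⟩
  exact length_le_of_sparse_DS t n S hDS hsp hcard

lemma flatten_map_dedup_sublist (Is : List (List ℕ)) :
    (Is.map List.dedup).flatten <+ Is.flatten := by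
  induction Is with
  | nil => exact List.Sublist.refl _
  | cons I Is ih =>
    simp only [List.map_cons, List.flatten_cons]
    exact List.Sublist.append (List.dedup_sublist I) ih

lemma bddAbove_lamB_set (s n m : ℕ) :
    BddAbove {l : ℕ | ∃ S : List ℕ, IsDS s S ∧ S.toFinset.card ≤ n ∧ Blocked m S ∧ S.length = l} := by
  refine ⟨m * n, ?_⟩
  rintro l ⟨S, hDS, hcard, ⟨Bs, hBl, hBn, rfl⟩, rfl⟩
  rw [List.length_flatten]
  have hsum : (Bs.map List.length).sum ≤ (Bs.map List.length).length • n := by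
    apply List.sum_le_card_nsmul
    intro x hx
    rw [List.mem_map] at hx
    obtain ⟨B, hB, rfl⟩ := hx
    have h1 : B.toFinset.card = B.length := List.toFinset_card_of_nodup (hBn B hB)
    have h2 : B.toFinset ⊆ Bs.flatten.toFinset := by
      intro z hz
      rw [List.mem_toFinset] at hz ⊢
      exact List.mem_flatten.mpr ⟨B, hB, hz⟩
    calc B.length = B.toFinset.card := h1.symm
      _ ≤ Bs.flatten.toFinset.card := Finset.card_le_card h2
      _ ≤ n := hcard
  rw [List.length_map, smul_eq_mul] at hsum
  calc (Bs.map List.length).sum ≤ Bs.length * n := hsum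
    _ ≤ m * n := Nat.mul_le_mul_right n hBl


/-- For `s ≥ 3` and nondecreasing `γ` with `λ_{s−2}(n) ≤ γ(n)·n` for all `n ≥ 1`,
we have `λ_s(n) ≤ γ(n)·λ_s(n, 2n−1)` for all `n ≥ 1`. -/
theorem stmt5 (s : ℕ) (hs : 3 ≤ s) (γ : ℕ → ℕ) (hγ : Monotone γ)
    (h : ∀ n : ℕ, 1 ≤ n → lamS (s - 2) n ≤ γ n * n) :
    ∀ n : ℕ, 1 ≤ n → lamS s n ≤ γ n * lamB s n (2 * n - 1) := by
  intro n hn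
  unfold lamS
  have hmem0 : (0:ℕ) ∈ {l : ℕ | ∃ S : List ℕ,
      IsDS s S ∧ Sparse2 S ∧ S.toFinset.card ≤ n ∧ S.length = l} :=
    ⟨[], isDS_nil s, List.isChain_nil, by simp, rfl⟩
  apply csSup_le ⟨0, hmem0⟩
  rintro l ⟨S, hDS, hsp, hcard, rfl⟩
  by_cases hSnil : S = []
  · subst hSnil; simp
  set Is := chop [] S with hIs
  have hfl : Is.flatten = S := chop_flatten S []
  -- per-interval bound
  have hkey : ∀ I ∈ Is, I.length ≤ γ n * I.dedup.length := by
    intro I hI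
    obtain ⟨A, B, hAB, p1, p2⟩ := chop_struct S [] I hI
    rw [List.nil_append] at hAB
    have hIDS : IsDS (s - 2) I := by
      refine isDS_interval (s-2) A I B p1 p2 ?_
      rw [show s - 2 + 2 = s by omega, List.append_assoc, hAB]
      exact hDS
    have hIinfix : I <:+: S := by rw [← hfl]; exact List.infix_of_mem_flatten hI
    have hIsp : Sparse2 I := List.IsChain.infix hsp hIinfix
    have hIsub : I.toFinset ⊆ S.toFinset := by
      intro z hz
      rw [List.mem_toFinset] at hz ⊢
      exact hIinfix.sublist.subset hz
    have hIcard : I.toFinset.card ≤ n := le_trans (Finset.card_le_card hIsub) hcard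
    have hIne : I ≠ [] := chop_ne_nil S [] I hI
    have hIpos : 1 ≤ I.toFinset.card :=
      Finset.card_pos.mpr ⟨I.head hIne, List.mem_toFinset.mpr (List.head_mem hIne)⟩
    have h1 : I.length ≤ lamS (s-2) I.toFinset.card := by
      apply le_csSup (bddAbove_lamS_set _ _)
      exact ⟨I, hIDS, hIsp, le_rfl, rfl⟩
    calc I.length ≤ γ I.toFinset.card * I.toFinset.card :=
          le_trans h1 (h _ hIpos)
      _ ≤ γ n * I.toFinset.card := Nat.mul_le_mul_right _ (hγ hIcard)
      _ = γ n * I.dedup.length := by rw [List.card_toFinset]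
  set S' := (Is.map List.dedup).flatten with hS'
  -- length comparison
  have hS'len : S.length ≤ γ n * S'.length := by
    have e1 : S.length = (Is.map List.length).sum := by
      rw [← hfl, List.length_flatten]
    have e2 : S'.length = (Is.map (fun I => I.dedup.length)).sum := by
      rw [hS', List.length_flatten, List.map_map]
      rfl
    have e3 : (Is.map List.length).sum ≤ (Is.map (fun I => γ n * I.dedup.length)).sum :=
      List.sum_le_sum hkey
    have e4 : (Is.map (fun I => γ n * I.dedup.length)).sum
        = γ n * (Is.map (fun I => I.dedup.length)).sum :=
      List.sum_map_mul_left _ _ _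
    rw [e1, e2]
    rw [e4] at e3
    exact e3
  have hS'sub : S' <+ S := by rw [← hfl]; exact flatten_map_dedup_sublist Is
  have hS'card : S'.toFinset.card ≤ n := by
    refine le_trans (Finset.card_le_card ?_) hcard
    intro z hz
    rw [List.mem_toFinset] at hz ⊢
    exact hS'sub.subset hz
  -- number of blocks
  have hblocks : Is.length ≤ 2 * n - 1 := by
    have hcc := chop_count S [] hSnil
    have hhead : S.headD 0 ∈ S.toFinset := by
      obtain ⟨x, S₀, rfl⟩ := List.exists_cons_of_ne_nil hSnil
      simp
    have hpos : 1 ≤ S.toFinset.card := Finset.card_pos.mpr ⟨_, hhead⟩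
    have hsd : (S.toFinset \ insert (S.headD 0) ([] : List ℕ).toFinset).card
        = S.toFinset.card - 1 := by
      rw [List.toFinset_nil]
      rw [show insert (S.headD 0) (∅ : Finset ℕ) = {S.headD 0} from rfl]
      rw [Finset.card_sdiff_of_subset (Finset.singleton_subset_iff.mpr hhead)]
      simp
    rw [hsd] at hcc
    rw [hIs] at *
    omega
  -- conclude
  have hlamB : S'.length ≤ lamB s n (2 * n - 1) := by
    unfold lamB
    apply le_csSup (bddAbove_lamB_set s n (2 * n - 1))
    refine ⟨S', hDS.sublist hS'sub, hS'card, ⟨Is.map List.dedup, ?_, ?_, rfl⟩, rfl⟩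
    · rw [List.length_map]; exact hblocks
    · intro B hB
      rw [List.mem_map] at hB
      obtain ⟨I, -, rfl⟩ := hB
      exact List.nodup_dedup I
  calc S.length ≤ γ n * S'.length := hS'len
    _ ≤ γ n * lamB s n (2 * n - 1) := Nat.mul_le_mul_left _ hlamB
end

section
/- Let s ≥ 3 and let γ_s, γ_{s−2} : ℕ → ℕ be nondecreasing functions such that λ_s(n) ≤ γ_s(n)·n and λ_{s−2}(n) ≤ γ_{s−2}(n)·n for all n ≥ 1. Then for all n ≥ 1: λ_s(n) ≤ γ_{s−2}(γ_s(n))·λ_s(n, 3n−1). -/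
namespace DS7

/-! ### altList basics -/

@[simp] lemma altList_length (k a b : ℕ) : (altList k a b).length = k := by
  induction k generalizing a b with
  | zero => rfl
  | succ k ih => simp [altList, ih]

lemma altList_getElem (k a b : ℕ) (i : ℕ) (h : i < k) :
    (altList k a b)[i]'(by simpa using h) = if i % 2 = 0 then a else b := by
  induction k generalizing a b i with
  | zero => omega
  | succ k ih =>
    cases i with
    | zero => simp [altList]
    | succ i =>
      have h' : i < k := by omega
      have := ih b a i h'
      simp only [altList, List.getElem_cons_succ]
      rw [this]
      rcases Nat.even_or_odd i with he | ho
      · have h1 : i % 2 = 0 := Nat.even_iff.mp he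
        have h2 : (i+1) % 2 = 1 := by omega
        simp [h1, h2]
      · have h1 : i % 2 = 1 := Nat.odd_iff.mp ho
        have h2 : (i+1) % 2 = 0 := by omega
        simp [h1, h2]

lemma altList_succ_append (k a b : ℕ) :
    altList (k+1) a b = altList k a b ++ [if k % 2 = 0 then a else b] := by
  induction k generalizing a b with
  | zero => simp [altList]
  | succ k ih =>
    show a :: altList (k+1) b a = (a :: altList k b a) ++ _
    rw [List.cons_append]
    congr 1
    rw [ih b a]
    congr 2
    rcases Nat.even_or_odd k with he | ho
    · have h1 : k % 2 = 0 := Nat.even_iff.mp he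
      have h2 : (k+1) % 2 = 1 := by omega
      simp [h1, h2]
    · have h1 : k % 2 = 1 := Nat.odd_iff.mp ho
      have h2 : (k+1) % 2 = 0 := by omega
      simp [h1, h2]

lemma altList_prefix (k m a b : ℕ) : ∃ t, altList (k+m) a b = altList k a b ++ t := by
  induction m with
  | zero => exact ⟨[], by simp⟩
  | succ m ih =>
    obtain ⟨t, ht⟩ := ih
    rw [show k + (m+1) = (k+m)+1 by omega, altList_succ_append, ht]
    exact ⟨t ++ [if (k+m) % 2 = 0 then a else b], by simp⟩

lemma altList_sublist_of_le {k k' : ℕ} (h : k ≤ k') (a b : ℕ) :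
    (altList k a b).Sublist (altList k' a b) := by
  obtain ⟨m, rfl⟩ := Nat.exists_eq_add_of_le h
  obtain ⟨t, ht⟩ := altList_prefix k m a b
  rw [ht]; exact List.sublist_append_left _ _

lemma mem_altList_one {k a b : ℕ} (h : 1 ≤ k) : a ∈ altList k a b := by
  cases k with
  | zero => omega
  | succ k => simp [altList]

lemma mem_altList_two {k a b : ℕ} (h : 2 ≤ k) : b ∈ altList k a b := by
  cases k with
  | zero => omega
  | succ k => cases k with
    | zero => omega
    | succ k => simp [altList]

lemma altList_cons (k a b : ℕ) : altList (k+1) b a = b :: altList k a b := rfl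

lemma IsDS.sublist {s : ℕ} {S T : List ℕ} (h : IsDS s S) (hsub : T.Sublist S) : IsDS s T :=
  fun a b hab hc => h a b hab (hc.trans hsub)

lemma Sparse2.infix {S T : List ℕ} (h : Sparse2 S) (hinf : T.IsInfix S) : Sparse2 T :=
  List.IsChain.infix h hinf

/-- elements of altList are among a, b -/
lemma mem_altList {k a b x : ℕ} (h : x ∈ altList k a b) : x = a ∨ x = b := by
  induction k generalizing a b with
  | zero => simp [altList] at h
  | succ k ih =>
    simp only [altList, List.mem_cons] at h
    rcases h with rfl | h
    · exact Or.inl rfl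
    · exact (ih h).symm
      
/-! ### key middle lemma -/

/-- If every symbol of `V` occurs both in `U` and in `W`, and `U++V++W` is order-s DS
    (s ≥ 3), then V is order-(s-2) DS. -/
lemma middle_isDS {s : ℕ} (hs : 3 ≤ s) {U V W : List ℕ}
    (hds : IsDS s (U ++ V ++ W)) (hmid : ∀ x ∈ V, x ∈ U ∧ x ∈ W) :
    IsDS (s - 2) V := by
  intro a b hab hsub
  have hk : s - 2 + 2 = s := by omega
  rw [hk] at hsub
  have ha : a ∈ V := hsub.subset (mem_altList_one (by omega))
  have hb : b ∈ V := hsub.subset (mem_altList_two (by omega))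
  have hbU : b ∈ U := (hmid b hb).1
  set e : ℕ := if s % 2 = 0 then a else b with he
  have heW : e ∈ W := by
    by_cases h0 : s % 2 = 0
    · simp only [he, if_pos h0]; exact (hmid a ha).2
    · simp only [he, if_neg h0]; exact (hmid b hb).2
  have key : altList (s + 2) b a = [b] ++ altList s a b ++ [e] := by
    show b :: altList (s+1) a b = _
    rw [altList_succ_append s a b]
    simp [he]
  have hsub2 : (altList (s + 2) b a).Sublist (U ++ V ++ W) := by
    rw [key]
    exact ((List.singleton_sublist.2 hbU).append hsub).append (List.singleton_sublist.2 heW)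
  exact hds b a (Ne.symm hab) hsub2

lemma alt_of_indices (a b : ℕ) :
    ∀ (N : ℕ) (js : List ℕ) (S : List ℕ), js.length ≤ N → js.Pairwise (· < ·) →
      (∀ j ∈ js, ∃ h : 2*j+1 < S.length, S[2*j]'(by omega) = a ∧ S[2*j+1] = b) →
      (altList (2 * js.length) a b).Sublist S := by
  intro N
  induction N with
  | zero =>
    intro js S hN _ _
    have : js = [] := List.eq_nil_of_length_eq_zero (by omega)
    subst this; simp [altList]
  | succ N ih =>
    intro js S hN hsort hcond
    match js with
    | [] => simp [altList]
    | j :: js =>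
    obtain ⟨hlt, ha, hb⟩ := hcond j (by simp)
    have h2j : 2*j < S.length := by omega
    have hdrop : S.drop (2*j) = a :: b :: S.drop (2*j+2) := by
      rw [List.drop_eq_getElem_cons h2j, ha, List.drop_eq_getElem_cons (by omega : 2*j+1 < S.length), hb]
    have hgt : ∀ i ∈ js, j < i := by
      intro i hi
      exact List.rel_of_pairwise_cons hsort hi
    have hIH : (altList (2 * js.length) a b).Sublist (S.drop (2*j+2)) := by
      have hjs' : (js.map (fun i => i - (j+1))).Pairwise (· < ·) := by
        rw [List.pairwise_map]
        refine hsort.tail.imp_of_mem ?_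
        intro x y hx hy hxy
        have := hgt x hx; have := hgt y hy
        omega
      have hlen : (js.map (fun i => i - (j+1))).length = js.length := by simp
      rw [← hlen]
      apply ih _ _ (by simp at hN ⊢; omega) hjs'
      intro i' hi'
      rw [List.mem_map] at hi'
      obtain ⟨i, hi, rfl⟩ := hi'
      obtain ⟨hlt2, ha2, hb2⟩ := hcond i (by simp [hi])
      have hji : j < i := hgt i hi
      have e1 : 2*j+2 + 2*(i - (j+1)) = 2*i := by omega
      have e2 : 2*j+2 + (2*(i - (j+1))+1) = 2*i+1 := by omega
      have hl : 2*(i - (j+1))+1 < (S.drop (2*j+2)).length := by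
        rw [List.length_drop]; omega
      refine ⟨hl, ?_, ?_⟩
      · rw [List.getElem_drop]; exact (getElem_congr_idx e1).trans ha2
      · rw [List.getElem_drop]; exact (getElem_congr_idx e2).trans hb2
    have heq : altList (2 * (js.length + 1)) a b = a :: b :: altList (2 * js.length) a b := by
      show altList (2*js.length+2) a b = _
      rfl
    rw [List.length_cons, heq]
    have s1 : (a :: b :: altList (2 * js.length) a b).Sublist (a :: b :: S.drop (2*j+2)) :=
      (hIH.cons₂ b).cons₂ a
    rw [← hdrop] at s1
    exact s1.trans (List.drop_sublist _ _)


lemma length_le_of_sparse_ds (s' n : ℕ) (S : List ℕ) (hds : IsDS s' S) (hsp : Sparse2 S)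
    (hcard : S.toFinset.card ≤ n) : S.length ≤ 2 * ((s'+2) * (n*n+1)) := by
  by_contra hlen
  push_neg at hlen
  set L : ℕ := (s'+2) * (n*n+1) with hL
  have hLpos : 2*L < S.length := by omega
  set f : ℕ → ℕ × ℕ := fun j => (S.getD (2*j) 0, S.getD (2*j+1) 0) with hf
  have hmaps : ∀ j ∈ Finset.range L, f j ∈ S.toFinset ×ˢ S.toFinset := by
    intro j hj
    rw [Finset.mem_range] at hj
    have h1 : 2*j < S.length := by omega
    have h2 : 2*j+1 < S.length := by omega
    rw [Finset.mem_product]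
    constructor
    · rw [hf]; simp only; rw [List.getD_eq_getElem _ _ h1]
      exact List.mem_toFinset.2 (List.getElem_mem _)
    · rw [hf]; simp only; rw [List.getD_eq_getElem _ _ h2]
      exact List.mem_toFinset.2 (List.getElem_mem _)
  have hcard2 : (S.toFinset ×ˢ S.toFinset).card * (s'+1) < (Finset.range L).card := by
    rw [Finset.card_product, Finset.card_range]
    have : S.toFinset.card * S.toFinset.card ≤ n * n := Nat.mul_le_mul hcard hcard
    calc S.toFinset.card * S.toFinset.card * (s'+1) ≤ n*n*(s'+1) := Nat.mul_le_mul_right _ this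
      _ < L := by rw [hL]; nlinarith
  obtain ⟨⟨a, b⟩, hyt, hfib⟩ := Finset.exists_lt_card_fiber_of_mul_lt_card_of_maps_to hmaps hcard2
  set fib := Finset.filter (fun x => f x = (a, b)) (Finset.range L) with hfibdef
  set js : List ℕ := fib.sort (· ≤ ·) with hjs
  have hjs_sorted : js.Pairwise (· < ·) := fib.sortedLT_sort.pairwise
  have hjs_len : js.length = fib.card := Finset.length_sort _
  have hjs_mem : ∀ j ∈ js, j < L ∧ f j = (a, b) := by
    intro j hj
    rw [hjs, Finset.mem_sort, hfibdef, Finset.mem_filter, Finset.mem_range] at hj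
    exact hj
  have hcond : ∀ j ∈ js, ∃ h : 2*j+1 < S.length, S[2*j]'(by omega) = a ∧ S[2*j+1] = b := by
    intro j hj
    obtain ⟨hjL, hfj⟩ := hjs_mem j hj
    have h2 : 2*j+1 < S.length := by omega
    refine ⟨h2, ?_, ?_⟩
    · have := congrArg Prod.fst hfj
      simp only [hf] at this
      rw [List.getD_eq_getElem _ _ (by omega : 2*j < S.length)] at this
      exact this
    · have := congrArg Prod.snd hfj
      simp only [hf] at this
      rw [List.getD_eq_getElem _ _ h2] at this
      exact this
  have hne : js ≠ [] := by
    intro h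
    rw [h] at hjs_len
    simp at hjs_len
    omega
  obtain ⟨j0, hj0⟩ := List.exists_mem_of_ne_nil js hne
  have hab : a ≠ b := by
    obtain ⟨h2, hga, hgb⟩ := hcond j0 hj0
    intro heq
    have hchain : List.IsChain (· ≠ ·) S := hsp
    rw [List.isChain_iff_getElem] at hchain
    have := hchain (2*j0) (by omega)
    rw [hga, hgb] at this
    exact this heq
  have hsubbig : (altList (2 * js.length) a b).Sublist S :=
    alt_of_indices a b js.length js S le_rfl hjs_sorted hcond
  have hsub : (altList (s'+2) a b).Sublist S := by
    refine (altList_sublist_of_le ?_ a b).trans hsubbig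
    omega
  exact hds a b hab hsub

/-! ### sSup helpers -/

lemma isDS_nil (s' : ℕ) : IsDS s' [] := by
  intro a b hab h
  have := h.length_le
  simp at this

lemma isDS_singleton (s' x : ℕ) : IsDS s' [x] := by
  intro a b hab h
  have := h.length_le
  simp at this

lemma setS_nonempty (s' n : ℕ) :
    {l : ℕ | ∃ S : List ℕ, IsDS s' S ∧ Sparse2 S ∧ S.toFinset.card ≤ n ∧ S.length = l}.Nonempty :=
  ⟨0, [], isDS_nil s', List.isChain_nil, by simp, rfl⟩

lemma setS_bdd (s' n : ℕ) :
    BddAbove {l : ℕ | ∃ S : List ℕ, IsDS s' S ∧ Sparse2 S ∧ S.toFinset.card ≤ n ∧ S.length = l} := by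
  refine ⟨2 * ((s'+2) * (n*n+1)), ?_⟩
  rintro l ⟨S, h1, h2, h3, rfl⟩
  exact length_le_of_sparse_ds s' n S h1 h2 h3

lemma le_lamS {s' n : ℕ} {S : List ℕ} (h1 : IsDS s' S) (h2 : Sparse2 S)
    (h3 : S.toFinset.card ≤ n) : S.length ≤ lamS s' n :=
  le_csSup (setS_bdd s' n) ⟨S, h1, h2, h3, rfl⟩

lemma lamS_le {s' n x : ℕ}
    (h : ∀ S : List ℕ, IsDS s' S → Sparse2 S → S.toFinset.card ≤ n → S.length ≤ x) :
    lamS s' n ≤ x :=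
  csSup_le (setS_nonempty s' n) (by rintro l ⟨S, h1, h2, h3, rfl⟩; exact h S h1 h2 h3)

lemma one_le_lamS (s' n : ℕ) (hn : 1 ≤ n) : 1 ≤ lamS s' n := by
  have : ([0] : List ℕ).length ≤ lamS s' n :=
    le_lamS (isDS_singleton s' 0) (List.isChain_singleton _) (by simp; omega)
  simpa using this

lemma setB_bdd (s' n m : ℕ) :
    BddAbove {l : ℕ | ∃ S : List ℕ, IsDS s' S ∧ S.toFinset.card ≤ n ∧ Blocked m S ∧ S.length = l} := by
  refine ⟨m * n, ?_⟩
  rintro l ⟨S, h1, h2, ⟨Bs, hBlen, hBnd, rfl⟩, rfl⟩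
  rw [List.length_flatten]
  have hone : ∀ B ∈ Bs, B.length ≤ n := by
    intro B hB
    have hsub : B.toFinset ⊆ Bs.flatten.toFinset := by
      intro x hx
      rw [List.mem_toFinset] at hx ⊢
      exact List.mem_flatten.2 ⟨B, hB, hx⟩
    calc B.length = B.toFinset.card := (List.toFinset_card_of_nodup (hBnd B hB)).symm
      _ ≤ Bs.flatten.toFinset.card := Finset.card_le_card hsub
      _ ≤ n := h2
  calc (Bs.map List.length).sum ≤ (Bs.map List.length).length * n := by
        apply List.sum_le_card_nsmul
        intro x hx
        rw [List.mem_map] at hx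
        obtain ⟨B, hB, rfl⟩ := hx
        exact hone B hB
    _ = Bs.length * n := by simp
    _ ≤ m * n := Nat.mul_le_mul_right _ hBlen

lemma le_lamB {s' n m : ℕ} {S : List ℕ} (h1 : IsDS s' S) (h2 : S.toFinset.card ≤ n)
    (h3 : Blocked m S) : S.length ≤ lamB s' n m :=
  le_csSup (setB_bdd s' n m) ⟨S, h1, h2, h3, rfl⟩

lemma sparse_card_le_one {S : List ℕ} (hsp : Sparse2 S) (hc : S.toFinset.card ≤ 1) :
    S.length ≤ 1 := by
  match S with
  | [] => simp
  | [x] => simp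
  | x :: y :: t =>
    exfalso
    have hxy : x ≠ y := List.isChain_cons_cons.1 hsp |>.1
    have hsubxy : ({x, y} : Finset ℕ) ⊆ (x :: y :: t).toFinset := by
      intro z hz
      simp only [Finset.mem_insert, Finset.mem_singleton] at hz
      rcases hz with rfl | rfl <;> simp
    have h2 : ({x, y} : Finset ℕ).card = 2 := Finset.card_pair hxy
    have := Finset.card_le_card hsubxy
    omega

/-! ### segmentation -/

abbrev Run := List (Bool × ℕ)

def runL (r : Run) : List ℕ := r.map (·.2)

def Fpart (r : Run) : List ℕ := (r.filter (·.1)).map (·.2)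

def Lpart (r : Run) : List ℕ := (r.filter (fun e => !e.1)).map (·.2)

@[simp] lemma runL_nil : runL [] = [] := rfl
@[simp] lemma runL_cons (f : Bool) (x : ℕ) (r : Run) : runL ((f,x) :: r) = x :: runL r := rfl
@[simp] lemma Fpart_nil : Fpart [] = [] := rfl
@[simp] lemma Lpart_nil : Lpart [] = [] := rfl

@[simp] lemma Fpart_cons_true (x : ℕ) (r : Run) : Fpart ((true,x) :: r) = x :: Fpart r := by
  simp [Fpart]
@[simp] lemma Fpart_cons_false (x : ℕ) (r : Run) : Fpart ((false,x) :: r) = Fpart r := by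
  simp [Fpart]
@[simp] lemma Lpart_cons_true (x : ℕ) (r : Run) : Lpart ((true,x) :: r) = Lpart r := by
  simp [Lpart]
@[simp] lemma Lpart_cons_false (x : ℕ) (r : Run) : Lpart ((false,x) :: r) = x :: Lpart r := by
  simp [Lpart]

lemma Fpart_subset (r : Run) : ∀ x ∈ Fpart r, x ∈ runL r := by
  intro x hx
  simp only [Fpart, List.mem_map, List.mem_filter] at hx
  obtain ⟨e, ⟨he, _⟩, rfl⟩ := hx
  exact List.mem_map.2 ⟨e, he, rfl⟩

lemma Lpart_subset (r : Run) : ∀ x ∈ Lpart r, x ∈ runL r := by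
  intro x hx
  simp only [Lpart, List.mem_map, List.mem_filter] at hx
  obtain ⟨e, ⟨he, _⟩, rfl⟩ := hx
  exact List.mem_map.2 ⟨e, he, rfl⟩

lemma FL_perm (r : Run) : (Fpart r ++ Lpart r).Perm (runL r) := by
  have h := List.filter_append_perm (·.1) r
  have := h.map (·.2)
  rw [List.map_append] at this
  exact this

lemma FL_length (r : Run) : (Fpart r).length + (Lpart r).length = r.length := by
  have := (FL_perm r).length_eq
  simpa [runL] using this

lemma Fpart_sublist_runL (r : Run) : (Fpart r).Sublist (runL r) := by
  simpa [Fpart, runL] using ((List.filter_sublist (p := (fun e : Bool × ℕ => e.1)) (l := r)).map (·.2))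

lemma Lpart_sublist_runL (r : Run) : (Lpart r).Sublist (runL r) := by
  simpa [Lpart, runL] using ((List.filter_sublist (p := (fun e : Bool × ℕ => !e.1)) (l := r)).map (·.2))

def RunOK : List ℕ → List ℕ → Run → Prop
  | _, _, [] => True
  | pre, post, (f, x) :: rest =>
      (f = true → x ∉ pre) ∧ (f = false → x ∉ runL rest ++ post) ∧ RunOK (pre ++ [x]) post rest

lemma runOK_F (post : List ℕ) :
    ∀ (r : Run) (pre : List ℕ), RunOK pre post r →
      (Fpart r).Nodup ∧ ∀ x ∈ Fpart r, x ∉ pre := by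
  intro r
  induction r with
  | nil => intro pre _; simp
  | cons e rest ih =>
    obtain ⟨f, x⟩ := e
    intro pre hok
    obtain ⟨h1, h2, h3⟩ := hok
    obtain ⟨ihnd, ihmem⟩ := ih (pre ++ [x]) h3
    cases f with
    | false =>
      rw [Fpart_cons_false]
      exact ⟨ihnd, fun y hy => fun hmem => ihmem y hy (by simp [hmem])⟩
    | true =>
      rw [Fpart_cons_true]
      constructor
      · rw [List.nodup_cons]
        refine ⟨fun hmem => ihmem x hmem (by simp), ihnd⟩
      · intro y hy
        rcases List.mem_cons.1 hy with rfl | hy'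
        · exact h1 rfl
        · intro hmem; exact ihmem y hy' (by simp [hmem])

lemma runOK_L (post : List ℕ) :
    ∀ (r : Run) (pre : List ℕ), RunOK pre post r →
      (Lpart r).Nodup ∧ ∀ x ∈ Lpart r, x ∉ post := by
  intro r
  induction r with
  | nil => intro pre _; simp
  | cons e rest ih =>
    obtain ⟨f, x⟩ := e
    intro pre hok
    obtain ⟨h1, h2, h3⟩ := hok
    obtain ⟨ihnd, ihmem⟩ := ih (pre ++ [x]) h3
    cases f with
    | true =>
      rw [Lpart_cons_true]
      exact ⟨ihnd, ihmem⟩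
    | false =>
      rw [Lpart_cons_false]
      have hx := h2 rfl
      rw [List.mem_append] at hx
      push_neg at hx
      constructor
      · rw [List.nodup_cons]
        exact ⟨fun hmem => hx.1 (Lpart_subset _ _ hmem), ihnd⟩
      · intro y hy
        rcases List.mem_cons.1 hy with rfl | hy'
        · exact hx.2
        · exact ihmem y hy'

lemma runOK_congr (post : List ℕ) :
    ∀ (r : Run) (pre pre' : List ℕ), (∀ x, x ∈ pre ↔ x ∈ pre') →
      RunOK pre post r → RunOK pre' post r := by
  intro r
  induction r with
  | nil => intro _ _ _ _; trivial
  | cons e rest ih =>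
    obtain ⟨f, x⟩ := e
    rintro pre pre' hiff ⟨h1, h2, h3⟩
    refine ⟨fun hf => fun hmem => h1 hf ((hiff x).2 hmem), h2, ?_⟩
    refine ih (pre ++ [x]) (pre' ++ [x]) ?_ h3
    intro y; simp [List.mem_append, hiff y]

def PieceOK (q : ℕ) (pre post p : List ℕ) : Prop :=
  p ≠ [] ∧ p.toFinset.card ≤ q ∧
  ∀ i (h : i < p.length), p[i] ∈ pre ++ p.take i ∧ p[i] ∈ p.drop (i+1) ++ post

lemma pieceOK_congr {q : ℕ} {pre pre' post p : List ℕ} (hiff : ∀ x, x ∈ pre ↔ x ∈ pre')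
    (h : PieceOK q pre post p) : PieceOK q pre' post p := by
  obtain ⟨h1, h2, h3⟩ := h
  refine ⟨h1, h2, fun i hi => ⟨?_, (h3 i hi).2⟩⟩
  have := (h3 i hi).1
  rw [List.mem_append] at this ⊢
  rcases this with h' | h'
  · exact Or.inl ((hiff _).1 h')
  · exact Or.inr h'

def flatRP : List (Run × List ℕ) → Run → List ℕ
  | [], tr => runL tr
  | (r, p) :: rest, tr => runL r ++ p ++ flatRP rest tr

def SegsOK (q : ℕ) : List ℕ → List (Run × List ℕ) → Run → Prop
  | pre, [], tr => RunOK pre [] tr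
  | pre, (r, p) :: rest, tr =>
      RunOK pre (p ++ flatRP rest tr) r ∧
      PieceOK q (pre ++ runL r) (flatRP rest tr) p ∧
      (match rest with
       | [] => tr ≠ []
       | (r', p') :: _ => r' = [] → p.toFinset.card = q ∧ ∃ y t', p' = y :: t' ∧ y ∉ p.toFinset) ∧
      SegsOK q (pre ++ runL r ++ p) rest tr

lemma segsOK_congr (q : ℕ) :
    ∀ (segs : List (Run × List ℕ)) (tr : Run) (pre pre' : List ℕ),
      (∀ x, x ∈ pre ↔ x ∈ pre') → SegsOK q pre segs tr → SegsOK q pre' segs tr := by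
  intro segs
  induction segs with
  | nil => intro tr pre pre' hiff h; exact runOK_congr _ _ _ _ hiff h
  | cons rp rest ih =>
    obtain ⟨r, p⟩ := rp
    rintro tr pre pre' hiff ⟨h1, h2, h3, h4⟩
    refine ⟨runOK_congr _ _ _ _ hiff h1,
      pieceOK_congr (fun x => by simp [List.mem_append, hiff x]) h2, h3, ?_⟩
    refine ih tr _ _ ?_ h4
    intro x; simp [List.mem_append, hiff x]

/-! ### greedy extraction -/

lemma extract_piece (q : ℕ) :
    ∀ (V U : List ℕ) (A : Finset ℕ), A.card ≤ q →
    ∃ p V', V = p ++ V' ∧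
      (∀ i (h : i < p.length), p[i] ∈ U ++ p.take i ∧ p[i] ∈ p.drop (i+1) ++ V') ∧
      (p.toFinset ∪ A).card ≤ q ∧
      (V' = [] → p = []) ∧
      (∀ y t', V' = y :: t' → (y ∈ U ++ p ∧ y ∈ t') →
        ((p.toFinset ∪ A).card = q ∧ y ∉ p.toFinset ∧ y ∉ A)) := by
  intro V
  induction V with
  | nil =>
    intro U A hA
    exact ⟨[], [], by simp, by simp, by simpa using hA, fun _ => rfl, by simp⟩
  | cons x t ih =>
    intro U A hA
    by_cases hadm : (x ∈ U ∧ x ∈ t) ∧ (x ∈ A ∨ A.card < q)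
    · have hA' : (insert x A).card ≤ q := by
        rcases hadm.2 with hxA | hlt
        · rwa [Finset.insert_eq_self.2 hxA]
        · calc (insert x A).card ≤ A.card + 1 := Finset.card_insert_le _ _
            _ ≤ q := by omega
      obtain ⟨p', V', hflat, helem, hcard, hemp, hover⟩ := ih (U ++ [x]) (insert x A) hA'
      have hset : (x :: p').toFinset ∪ A = p'.toFinset ∪ insert x A := by
        simp only [List.toFinset_cons]
        rw [Finset.insert_union, Finset.union_insert]
      refine ⟨x :: p', V', by simp [hflat], ?_, by rw [hset]; exact hcard, ?_, ?_⟩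
      · intro i hi
        cases i with
        | zero =>
          constructor
          · simp only [List.getElem_cons_zero, List.take_zero, List.append_nil]
            exact hadm.1.1
          · simp only [List.getElem_cons_zero, List.drop_one, List.tail_cons]
            rw [hflat] at hadm
            exact hadm.1.2
        | succ i =>
          have hi' : i < p'.length := by simpa using hi
          obtain ⟨hl, hr⟩ := helem i hi'
          constructor
          · simp only [List.getElem_cons_succ, List.take_succ_cons]
            have : U ++ x :: p'.take i = (U ++ [x]) ++ p'.take i := by simp
            rw [this]
            exact hl
          · simpa using hr
      · intro hV'
        exfalso
        have hp' := hemp hV'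
        subst hp'
        rw [hV'] at hflat
        simp only [List.nil_append, List.append_nil] at hflat
        have hxt := hadm.1.2
        rw [hflat] at hxt
        simp at hxt
      · intro y t' hV' hmem
        have hmem' : y ∈ (U ++ [x]) ++ p' ∧ y ∈ t' := by
          refine ⟨?_, hmem.2⟩
          have := hmem.1
          simp only [List.mem_append, List.mem_cons] at this ⊢
          tauto
        obtain ⟨hc, hnp, hnA⟩ := hover y t' hV' hmem'
        refine ⟨by rw [hset]; exact hc, ?_, ?_⟩
        · simp only [List.toFinset_cons, Finset.mem_insert]
          push_neg
          refine ⟨?_, hnp⟩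
          intro rfl'
          exact hnA (by simp [rfl'])
        · intro hyA
          exact hnA (by simp [hyA])
    · refine ⟨[], x :: t, by simp, by simp, by simpa using hA, by simp, ?_⟩
      rintro y t' heq ⟨hy1, hy2⟩
      injection heq with e1 e2
      subst e1; subst e2
      simp only [List.append_nil] at hy1
      have : ¬ (x ∈ A ∨ A.card < q) := fun h => hadm ⟨⟨hy1, hy2⟩, h⟩
      push_neg at this
      refine ⟨by simp; omega, by simp, this.1⟩

lemma extract_run :
    ∀ (V U : List ℕ), ∃ (r : Run) (V' : List ℕ),
      V = runL r ++ V' ∧ RunOK U V' r ∧ (∀ x t', V' = x :: t' → x ∈ U ++ runL r ∧ x ∈ t') := by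
  intro V
  induction V with
  | nil => exact fun U => ⟨[], [], by simp, trivial, by simp⟩
  | cons x t ih =>
    intro U
    by_cases hmid : x ∈ U ∧ x ∈ t
    · refine ⟨[], x :: t, by simp, trivial, ?_⟩
      rintro y t' heq
      injection heq with e1 e2
      subst e1; subst e2
      exact ⟨by simp [hmid.1], hmid.2⟩
    · obtain ⟨r', V', hflat, hok, hhead⟩ := ih (U ++ [x])
      refine ⟨(!(decide (x ∈ U)), x) :: r', V', by simp [hflat], ?_, ?_⟩
      · refine ⟨?_, ?_, hok⟩
        · intro hf
          simp only [Bool.not_eq_true'] at hf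
          exact fun hmem => by simp [hmem] at hf
        · intro hf
          simp only [Bool.not_eq_false'] at hf
          have hxU : x ∈ U := by simpa using hf
          have hxt : x ∉ t := fun h => hmid ⟨hxU, h⟩
          rw [hflat] at hxt
          intro hmem
          exact hxt hmem
      · rintro y t' heq
        obtain ⟨h1, h2⟩ := hhead y t' heq
        constructor
        · simp only [runL_cons, List.mem_append, List.mem_cons] at h1 ⊢
          tauto
        · exact h2

lemma build (q : ℕ) (hq : 1 ≤ q) :
    ∀ (N : ℕ) (V U : List ℕ), V.length ≤ N →
    ∃ segs tr, V = flatRP segs tr ∧ SegsOK q U segs tr := by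
  intro N
  induction N with
  | zero =>
    intro V U hN
    have : V = [] := List.eq_nil_of_length_eq_zero (by omega)
    subst this
    exact ⟨[], [], rfl, trivial⟩
  | succ N ihN =>
    intro V U hN
    obtain ⟨r, V₁, hflat1, hok1, hhead1⟩ := extract_run V U
    match hV1 : V₁ with
    | [] =>
      refine ⟨[], r, by simpa [flatRP] using hflat1, ?_⟩
      exact hok1
    | x :: t =>
      have hx : x ∈ U ++ runL r ∧ x ∈ t := hhead1 x t rfl
      obtain ⟨p, V₂, hflat2, helem, hcard, hemp, hover⟩ :=
        extract_piece q (x :: t) (U ++ runL r) ∅ (by simp)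
      have hpne : p ≠ [] := by
        intro hp
        subst hp
        simp only [List.nil_append] at hflat2
        have := hover x t hflat2.symm ⟨by simpa using hx.1, hx.2⟩
        simp at this
        omega
      have hlen2 : V₂.length ≤ N := by
        have h1 := congrArg List.length hflat1
        have h2 := congrArg List.length hflat2
        simp only [List.length_append, List.length_cons] at h1 h2
        have hp1 : 1 ≤ p.length := List.length_pos_iff.2 hpne
        omega
      obtain ⟨segs', tr', hflat3, hok3⟩ := ihN V₂ (U ++ runL r ++ p) hlen2
      refine ⟨(r, p) :: segs', tr', ?_, ?_, ?_, ?_, ?_⟩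
      · show V = runL r ++ p ++ flatRP segs' tr'
        rw [hflat1, hflat2, hflat3]
        simp [List.append_assoc]
      · show RunOK U (p ++ flatRP segs' tr') r
        rw [← hflat3, ← hflat2]
        exact hok1
      · show PieceOK q (U ++ runL r) (flatRP segs' tr') p
        refine ⟨hpne, by simpa using hcard, ?_⟩
        rw [← hflat3]
        exact helem
      · -- overflow / trailing clause
        match hsegs' : segs' with
        | [] =>
          show tr' ≠ []
          intro htr
          have : V₂ = [] := by rw [hflat3, htr]; rfl
          exact hpne (hemp this)
        | (r₂, p₂) :: rest₂ =>
          intro hr₂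
          obtain ⟨hok3a, hok3b, hok3c, hok3d⟩ := hok3
          obtain ⟨hp₂ne, _, helem₂⟩ := hok3b
          match hp₂ : p₂ with
          | [] => exact absurd rfl hp₂ne
          | y :: t₂ =>
            have hyV₂ : V₂ = y :: (t₂ ++ flatRP rest₂ tr') := by
              rw [hflat3, hr₂]
              simp [flatRP]
            have hy0 := helem₂ 0 (by simp)
            simp only [List.getElem_cons_zero, List.take_zero, List.append_nil,
              List.drop_one, List.tail_cons] at hy0
            rw [hr₂] at hy0
            have hymem : y ∈ (U ++ runL r) ++ p ∧ y ∈ t₂ ++ flatRP rest₂ tr' := by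
              constructor
              · have := hy0.1
                simp only [runL_nil, List.append_nil] at this
                simpa [List.mem_append] using this
              · exact hy0.2
            have := hover y (t₂ ++ flatRP rest₂ tr') hyV₂ hymem
            refine ⟨by simpa using this.1, y, t₂, rfl, this.2.1⟩
      · show SegsOK q (U ++ runL r ++ p) segs' tr'
        exact hok3

/-! ### counting -/

def numC : List (Run × List ℕ) → Run → ℕ
  | [], tr => tr.length
  | (r, _) :: rest, tr => r.length + numC rest tr

def numCafter : List (Run × List ℕ) → Run → ℕ
  | [], tr => tr.length
  | (_, _) :: rest, tr => numC rest tr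

def numN : List (Run × List ℕ) → ℕ
  | [] => 0
  | (_, p) :: rest => p.toFinset.card + numN rest

def numPL : List (Run × List ℕ) → ℕ
  | [] => 0
  | (_, p) :: rest => p.length + numPL rest

def allF : List (Run × List ℕ) → Run → List ℕ
  | [], tr => Fpart tr
  | (r, _) :: rest, tr => Fpart r ++ allF rest tr

def allL : List (Run × List ℕ) → Run → List ℕ
  | [], tr => Lpart tr
  | (r, _) :: rest, tr => Lpart r ++ allL rest tr

lemma flatRP_length (segs : List (Run × List ℕ)) (tr : Run) :
    (flatRP segs tr).length = numC segs tr + numPL segs := by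
  induction segs with
  | nil => simp [flatRP, numC, numPL, runL]
  | cons rp rest ih =>
    obtain ⟨r, p⟩ := rp
    simp [flatRP, numC, numPL, runL, ih]
    omega

lemma numN_le_numPL (segs : List (Run × List ℕ)) : numN segs ≤ numPL segs := by
  induction segs with
  | nil => simp [numN, numPL]
  | cons rp rest ih =>
    obtain ⟨r, p⟩ := rp
    have := (List.toFinset_card_le p).trans (le_refl _)
    simp only [numN, numPL]
    omega

lemma numC_eq_FL (segs : List (Run × List ℕ)) (tr : Run) :
    numC segs tr = (allF segs tr).length + (allL segs tr).length := by
  induction segs with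
  | nil => simpa [numC, allF, allL] using (FL_length tr).symm
  | cons rp rest ih =>
    obtain ⟨r, p⟩ := rp
    simp only [numC, allF, allL, List.length_append, ih]
    have := FL_length r
    omega

lemma allF_subset_flat (segs : List (Run × List ℕ)) (tr : Run) :
    ∀ x ∈ allF segs tr, x ∈ flatRP segs tr := by
  induction segs with
  | nil => exact fun x hx => Fpart_subset tr x hx
  | cons rp rest ih =>
    obtain ⟨r, p⟩ := rp
    intro x hx
    simp only [allF, List.mem_append] at hx
    simp only [flatRP, List.mem_append]
    rcases hx with h | h
    · exact Or.inl (Or.inl (Fpart_subset r x h))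
    · exact Or.inr (ih x h)

lemma allL_subset_flat (segs : List (Run × List ℕ)) (tr : Run) :
    ∀ x ∈ allL segs tr, x ∈ flatRP segs tr := by
  induction segs with
  | nil => exact fun x hx => Lpart_subset tr x hx
  | cons rp rest ih =>
    obtain ⟨r, p⟩ := rp
    intro x hx
    simp only [allL, List.mem_append] at hx
    simp only [flatRP, List.mem_append]
    rcases hx with h | h
    · exact Or.inl (Or.inl (Lpart_subset r x h))
    · exact Or.inr (ih x h)

lemma allF_nodup (q : ℕ) :
    ∀ (segs : List (Run × List ℕ)) (tr : Run) (pre : List ℕ), SegsOK q pre segs tr →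
      (allF segs tr).Nodup ∧ ∀ x ∈ allF segs tr, x ∉ pre := by
  intro segs
  induction segs with
  | nil =>
    intro tr pre hok
    exact runOK_F [] tr pre hok
  | cons rp rest ih =>
    obtain ⟨r, p⟩ := rp
    rintro tr pre ⟨h1, h2, h3, h4⟩
    obtain ⟨hnd1, hmem1⟩ := runOK_F _ r pre h1
    obtain ⟨hnd2, hmem2⟩ := ih tr _ h4
    constructor
    · simp only [allF]
      rw [List.nodup_append]
      refine ⟨hnd1, hnd2, ?_⟩
      intro x hx y hx2 hxy
      subst hxy
      have hxr : x ∈ runL r := Fpart_subset r x hx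
      exact hmem2 x hx2 (by simp [List.mem_append, hxr])
    · intro x hx
      simp only [allF, List.mem_append] at hx
      rcases hx with h | h
      · exact hmem1 x h
      · intro hp
        exact hmem2 x h (by simp [List.mem_append, hp])

lemma allL_nodup (q : ℕ) :
    ∀ (segs : List (Run × List ℕ)) (tr : Run) (pre : List ℕ), SegsOK q pre segs tr →
      (allL segs tr).Nodup := by
  intro segs
  induction segs with
  | nil =>
    intro tr pre hok
    exact (runOK_L [] tr pre hok).1
  | cons rp rest ih =>
    obtain ⟨r, p⟩ := rp
    rintro tr pre ⟨h1, h2, h3, h4⟩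
    obtain ⟨hnd1, hmem1⟩ := runOK_L _ r pre h1
    have hnd2 := ih tr _ h4
    simp only [allL]
    rw [List.nodup_append]
    refine ⟨hnd1, hnd2, ?_⟩
    intro x hx y hx2 hxy
    subst hxy
    have hxflat : x ∈ flatRP rest tr := allL_subset_flat rest tr x hx2
    exact hmem1 x hx (by simp [List.mem_append, hxflat])

lemma nodup_card_le (l : List ℕ) (F : Finset ℕ) (hnd : l.Nodup) (hsub : ∀ x ∈ l, x ∈ F) :
    l.length ≤ F.card := by
  rw [← List.toFinset_card_of_nodup hnd]
  apply Finset.card_le_card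
  intro x hx
  exact hsub x (List.mem_toFinset.1 hx)

/-- main piece-count bound -/
lemma count_main (q : ℕ) :
    ∀ (segs : List (Run × List ℕ)) (tr : Run) (pre : List ℕ), SegsOK q pre segs tr →
      q * segs.length ≤ numN segs + q * numCafter segs tr := by
  intro segs
  induction segs with
  | nil => intro tr pre _; simp [numN, numCafter]
  | cons rp rest ih =>
    obtain ⟨r, p⟩ := rp
    rintro tr pre ⟨h1, h2, h3, h4⟩
    have IH := ih tr _ h4
    simp only [numN, numCafter, List.length_cons]
    match rest, h3 with
    | [], h3 =>
      have htr : 1 ≤ tr.length := by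
        have := h3
        cases tr with
        | nil => exact absurd rfl this
        | cons a t => simp
      simp only [numC]
      simp only [List.length_nil, numN, numCafter] at IH ⊢
      nlinarith
    | (r', p') :: rest₂, h3 =>
      simp only [numC]
      simp only [numCafter] at IH
      by_cases hr' : r' = []
      · obtain ⟨hcard, _⟩ := h3 hr'
        subst hr'
        simp only [List.length_nil] at *
        nlinarith
      · have : 1 ≤ r'.length := List.length_pos_iff.2 hr'
        nlinarith

/-- first run nonempty, when pre = [] -/
lemma first_run_ne (q : ℕ) (r : Run) (p : List ℕ) (rest : List (Run × List ℕ)) (tr : Run)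
    (hok : SegsOK q [] ((r, p) :: rest) tr) : r ≠ [] := by
  obtain ⟨h1, h2, h3, h4⟩ := hok
  obtain ⟨hne, _, helem⟩ := h2
  intro hr
  match hp : p with
  | [] => exact hne rfl
  | y :: t =>
    have := (helem 0 (by simp)).1
    simp only [List.getElem_cons_zero, List.take_zero, List.append_nil, List.nil_append] at this
    rw [hr] at this
    simp [runL] at this

/-- piece-count bound when no overflow can occur (q ≥ alphabet) -/
lemma count_noover (q : ℕ) (F : Finset ℕ) (hqF : F.card ≤ q) :
    ∀ (segs : List (Run × List ℕ)) (tr : Run) (pre : List ℕ), SegsOK q pre segs tr →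
      (∀ x ∈ flatRP segs tr, x ∈ F) →
      segs.length ≤ numCafter segs tr := by
  intro segs
  induction segs with
  | nil => intro tr pre _ _; simp [numCafter]
  | cons rp rest ih =>
    obtain ⟨r, p⟩ := rp
    rintro tr pre ⟨h1, h2, h3, h4⟩ hsub
    have hsub' : ∀ x ∈ flatRP rest tr, x ∈ F := by
      intro x hx
      exact hsub x (by simp only [flatRP, List.mem_append]; exact Or.inr hx)
    have IH := ih tr _ h4 hsub'
    simp only [numCafter, List.length_cons]
    match rest, h3, IH with
    | [], h3, IH =>
      have htr : 1 ≤ tr.length := by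
        cases tr with
        | nil => exact absurd rfl h3
        | cons a t => simp
      simpa [numC] using htr
    | (r', p') :: rest₂, h3, IH =>
      simp only [numC]
      simp only [numCafter] at IH
      have hr' : r' ≠ [] := by
        intro hr'
        obtain ⟨hcard, y, t', hp', hyp⟩ := h3 hr'
        -- p.toFinset = F since card p = q ≥ F.card and p ⊆ F
        have hpsub : p.toFinset ⊆ F := by
          intro z hz
          rw [List.mem_toFinset] at hz
          exact hsub z (by simp only [flatRP, List.mem_append]; exact Or.inl (Or.inr hz))
        have heq : p.toFinset = F := Finset.eq_of_subset_of_card_le hpsub (by omega)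
        have hyF : y ∈ F := by
          refine hsub' y ?_
          simp only [flatRP, hp', List.mem_append, List.mem_cons]
          tauto
        rw [← heq] at hyF
        exact hyp hyF
      have : 1 ≤ r'.length := List.length_pos_iff.2 hr'
      omega

set_option linter.unreachableTactic false in
set_option linter.unusedTactic false in
set_option linter.unnecessarySeqFocus false in
lemma runperm_core (s : ℕ) (hs : 3 ≤ s) (A F L B runl : List ℕ)
    (hFnd : F.Nodup) (hLnd : L.Nodup)
    (hFA : ∀ x ∈ F, x ∉ A) (hLB : ∀ x ∈ L, x ∉ B)
    (hFr : F.Sublist runl) (hLr : L.Sublist runl)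
    (hDS : IsDS s (A ++ (runl ++ B))) :
    IsDS s (A ++ (F ++ (L ++ B))) := by
  intro u v huv hsub
  rw [List.sublist_append_iff] at hsub
  obtain ⟨t1, rest1, heq1, hsub1, hrest1⟩ := hsub
  rw [List.sublist_append_iff] at hrest1
  obtain ⟨t2, rest2, heq2, hsub2, hrest2⟩ := hrest1
  rw [List.sublist_append_iff] at hrest2
  obtain ⟨t3, t4, heq3, hsub3, hsub4⟩ := hrest2
  set PP : List ℕ := altList (s+2) u v with hPP
  have heq : PP = t1 ++ (t2 ++ (t3 ++ t4)) := by rw [heq1, heq2, heq3]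
  set k1 := t1.length
  set k2 := t2.length
  set k3 := t3.length
  set k4 := t4.length
  have hktot : k1 + (k2 + (k3 + k4)) = s + 2 := by
    have h := congrArg List.length heq
    rw [hPP] at h
    simp only [altList_length, List.length_append] at h
    omega
  -- getElem characterizations
  have hPPel : ∀ i (h : i < s + 2), PP[i]'(by rw [hPP, altList_length]; omega) =
      if i % 2 = 0 then u else v := fun i h => altList_getElem (s+2) u v i h
  have hlenPP : PP.length = s + 2 := by rw [hPP, altList_length]
  have e1 : ∀ j (h : j < k1), t1[j] = if j % 2 = 0 then u else v := by
    intro j h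
    have hj2 : j < PP.length := by omega
    have : PP[j]'hj2 = t1[j] := by
      rw [List.getElem_of_eq heq hj2]
      exact List.getElem_append_left (by omega)
    rw [← this]
    have := hPPel j (by omega)
    convert this using 2
  have e2 : ∀ j (h : j < k2), t2[j] = if (k1 + j) % 2 = 0 then u else v := by
    intro j h
    have hj2 : k1 + j < PP.length := by omega
    have : PP[k1 + j]'hj2 = t2[j] := by
      rw [List.getElem_of_eq heq hj2]
      rw [List.getElem_append_right (by omega : t1.length ≤ k1 + j)]
      rw [List.getElem_append_left (by omega)]
      congr 1
      omega
    rw [← this]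
    have := hPPel (k1+j) (by omega)
    convert this using 2
  have e3 : ∀ j (h : j < k3), t3[j] = if (k1 + k2 + j) % 2 = 0 then u else v := by
    intro j h
    have hj2 : k1 + (k2 + j) < PP.length := by omega
    have : PP[k1 + (k2 + j)]'hj2 = t3[j] := by
      rw [List.getElem_of_eq heq hj2]
      rw [List.getElem_append_right (by omega : t1.length ≤ k1 + (k2+j))]
      rw [List.getElem_append_right (by omega)]
      rw [List.getElem_append_left (by omega)]
      congr 1
      omega
    rw [← this]
    have := hPPel (k1+(k2+j)) (by omega)
    rw [this]
    congr 2
    omega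
  have e4 : ∀ j (h : j < k4), t4[j] = if (k1 + k2 + k3 + j) % 2 = 0 then u else v := by
    intro j h
    have hj2 : k1 + (k2 + (k3 + j)) < PP.length := by omega
    have : PP[k1 + (k2 + (k3 + j))]'hj2 = t4[j] := by
      rw [List.getElem_of_eq heq hj2]
      rw [List.getElem_append_right (by omega : t1.length ≤ k1 + (k2+(k3+j)))]
      rw [List.getElem_append_right (by omega)]
      rw [List.getElem_append_right (by omega)]
      congr 1
      omega
    rw [← this]
    have := hPPel (k1+(k2+(k3+j))) (by omega)
    rw [this]
    congr 2
    omega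
  -- reassembly cases
  by_cases hk2 : k2 = 0
  · have ht2 : t2 = [] := List.eq_nil_of_length_eq_zero hk2
    have : PP.Sublist (A ++ (runl ++ B)) := by
      rw [heq, ht2]
      simp only [List.nil_append]
      exact hsub1.append ((hsub3.trans hLr).append hsub4)
    exact hDS u v huv this
  by_cases hk3 : k3 = 0
  · have ht3 : t3 = [] := List.eq_nil_of_length_eq_zero hk3
    have : PP.Sublist (A ++ (runl ++ B)) := by
      rw [heq, ht3]
      simp only [List.nil_append]
      exact hsub1.append (((hsub2.trans hFr).append hsub4))
    exact hDS u v huv this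
  -- now k2, k3 ≥ 1
  have hk2' : 1 ≤ k2 := by omega
  have hk3' : 1 ≤ k3 := by omega
  -- k2 ≤ 2 via nodup
  have hk2le : k2 ≤ 2 := by
    by_contra h
    push_neg at h
    have hnd : t2.Nodup := hsub2.nodup hFnd
    have h02 : t2[0]'(by omega) = t2[2]'(by omega) := by
      rw [e2 0 (by omega), e2 2 (by omega)]
      congr 2
      omega
    have := (List.Nodup.getElem_inj_iff hnd).1 h02
    omega
  have hk3le : k3 ≤ 2 := by
    by_contra h
    push_neg at h
    have hnd : t3.Nodup := hsub3.nodup hLnd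
    have h02 : t3[0]'(by omega) = t3[2]'(by omega) := by
      rw [e3 0 (by omega), e3 2 (by omega)]
      congr 2
      omega
    have := (List.Nodup.getElem_inj_iff hnd).1 h02
    omega
  -- A-side constraints
  have hA1 : ¬ (2 ≤ k1) := by
    intro h
    have hx : t1[k1-2]'(by omega) = t2[0]'(by omega) := by
      rw [e1 (k1-2) (by omega), e2 0 (by omega)]
      congr 2
      omega
    have hmemA : t1[k1-2]'(by omega) ∈ A := hsub1.subset (List.getElem_mem _)
    have hmemF : t2[0]'(by omega) ∈ F := hsub2.subset (List.getElem_mem _)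
    rw [hx] at hmemA
    exact hFA _ hmemF hmemA
  have hA2 : ¬ (1 ≤ k1 ∧ 2 ≤ k2) := by
    rintro ⟨h1, h2⟩
    have hx : t1[k1-1]'(by omega) = t2[1]'(by omega) := by
      rw [e1 (k1-1) (by omega), e2 1 (by omega)]
      congr 2
      omega
    have hmemA : t1[k1-1]'(by omega) ∈ A := hsub1.subset (List.getElem_mem _)
    have hmemF : t2[1]'(by omega) ∈ F := hsub2.subset (List.getElem_mem _)
    rw [hx] at hmemA
    exact hFA _ hmemF hmemA
  -- B-side constraints
  have hB1 : ¬ (2 ≤ k4) := by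
    intro h
    have hx : t4[1]'(by omega) = t3[k3-1]'(by omega) := by
      rw [e4 1 (by omega), e3 (k3-1) (by omega)]
      congr 2
      omega
    have hmemB : t4[1]'(by omega) ∈ B := hsub4.subset (List.getElem_mem _)
    have hmemL : t3[k3-1]'(by omega) ∈ L := hsub3.subset (List.getElem_mem _)
    rw [hx] at hmemB
    exact hLB _ hmemL hmemB
  have hB2 : ¬ (2 ≤ k3 ∧ 1 ≤ k4) := by
    rintro ⟨h1, h2⟩
    have hx : t4[0]'(by omega) = t3[k3-2]'(by omega) := by
      rw [e4 0 (by omega), e3 (k3-2) (by omega)]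
      congr 2
      omega
    have hmemB : t4[0]'(by omega) ∈ B := hsub4.subset (List.getElem_mem _)
    have hmemL : t3[k3-2]'(by omega) ∈ L := hsub3.subset (List.getElem_mem _)
    rw [hx] at hmemB
    exact hLB _ hmemL hmemB
  omega

/-! ### the blocked witness -/

def mkBlocks : List ℕ → List (Run × List ℕ) → Run → List (List ℕ)
  | cur, [], tr => [cur ++ Fpart tr, Lpart tr]
  | cur, (r, _p) :: rest, tr => (cur ++ Fpart r) :: mkBlocks (Lpart r ++ _p.dedup) rest tr

def flatShuf : List (Run × List ℕ) → Run → List ℕ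
  | [], tr => Fpart tr ++ Lpart tr
  | (r, p) :: rest, tr => Fpart r ++ (Lpart r ++ (p ++ flatShuf rest tr))

lemma mkBlocks_length : ∀ (segs : List (Run × List ℕ)) (tr : Run) (cur : List ℕ),
    (mkBlocks cur segs tr).length = segs.length + 2 := by
  intro segs
  induction segs with
  | nil => intro tr cur; simp [mkBlocks]
  | cons rp rest ih =>
    obtain ⟨r, p⟩ := rp
    intro tr cur
    simp [mkBlocks, ih]

lemma mkBlocks_flatten_length : ∀ (segs : List (Run × List ℕ)) (tr : Run) (cur : List ℕ),
    ((mkBlocks cur segs tr).flatten).length = cur.length + numC segs tr + numN segs := by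
  intro segs
  induction segs with
  | nil =>
    intro tr cur
    simp [mkBlocks, numC, numN]
    have := FL_length tr
    omega
  | cons rp rest ih =>
    obtain ⟨r, p⟩ := rp
    intro tr cur
    simp only [mkBlocks, List.flatten_cons, List.length_append, ih, numC, numN]
    have h1 := FL_length r
    have h2 : p.dedup.length = p.toFinset.card := (List.card_toFinset p).symm
    omega

lemma mkBlocks_flatten_sublist : ∀ (segs : List (Run × List ℕ)) (tr : Run) (cur : List ℕ),
    ((mkBlocks cur segs tr).flatten).Sublist (cur ++ flatShuf segs tr) := by
  intro segs
  induction segs with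
  | nil =>
    intro tr cur
    simp only [mkBlocks, flatShuf, List.flatten_cons, List.flatten_nil, List.append_nil]
    rw [List.append_assoc]
  | cons rp rest ih =>
    obtain ⟨r, p⟩ := rp
    intro tr cur
    simp only [mkBlocks, flatShuf, List.flatten_cons]
    have h1 := ih tr (Lpart r ++ p.dedup)
    have s1 : ((cur ++ Fpart r) ++ (mkBlocks (Lpart r ++ p.dedup) rest tr).flatten).Sublist
        ((cur ++ Fpart r) ++ ((Lpart r ++ p.dedup) ++ flatShuf rest tr)) :=
      (List.Sublist.refl _).append h1
    have hd : (p.dedup ++ flatShuf rest tr).Sublist (p ++ flatShuf rest tr) :=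
      (List.dedup_sublist p).append_right _
    have s2 : ((Lpart r ++ p.dedup) ++ flatShuf rest tr).Sublist
        (Lpart r ++ (p ++ flatShuf rest tr)) := by
      rw [List.append_assoc]
      exact (List.Sublist.refl _).append hd
    have s3 : ((cur ++ Fpart r) ++ ((Lpart r ++ p.dedup) ++ flatShuf rest tr)).Sublist
        ((cur ++ Fpart r) ++ (Lpart r ++ (p ++ flatShuf rest tr))) :=
      (List.Sublist.refl _).append s2
    have s4 := s1.trans s3
    simpa only [List.append_assoc] using s4

lemma flatShuf_perm (segs : List (Run × List ℕ)) (tr : Run) :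
    (flatShuf segs tr).Perm (flatRP segs tr) := by
  induction segs with
  | nil => simpa [flatShuf, flatRP] using FL_perm tr
  | cons rp rest ih =>
    obtain ⟨r, p⟩ := rp
    simp only [flatShuf, flatRP]
    have p1 : (Fpart r ++ (Lpart r ++ (p ++ flatShuf rest tr))).Perm
        ((Fpart r ++ Lpart r) ++ (p ++ flatShuf rest tr)) := by
      rw [List.append_assoc]
    have p2 : ((Fpart r ++ Lpart r) ++ (p ++ flatShuf rest tr)).Perm
        (runL r ++ (p ++ flatShuf rest tr)) := (FL_perm r).append_right _
    have p3 : (runL r ++ (p ++ flatShuf rest tr)).Perm (runL r ++ (p ++ flatRP rest tr)) :=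
      (ih.append_left p).append_left (runL r)
    have p4 := (p1.trans p2).trans p3
    simpa only [List.append_assoc] using p4

lemma mkBlocks_nodup (q : ℕ) :
    ∀ (segs : List (Run × List ℕ)) (tr : Run) (pre cur : List ℕ),
      SegsOK q pre segs tr → cur.Nodup → (∀ x ∈ cur, x ∈ pre) →
      ∀ B ∈ mkBlocks cur segs tr, B.Nodup := by
  intro segs
  induction segs with
  | nil =>
    intro tr pre cur hok hnd hsub B hB
    obtain ⟨hFnd, hFmem⟩ := runOK_F [] tr pre hok
    obtain ⟨hLnd, _⟩ := runOK_L [] tr pre hok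
    simp only [mkBlocks, List.mem_cons, List.mem_singleton] at hB
    rcases hB with rfl | rfl | h
    · rw [List.nodup_append]
      exact ⟨hnd, hFnd, fun x hx y hx2 hxy => hFmem y hx2 (hxy ▸ hsub x hx)⟩
    · exact hLnd
    · simp at h
  | cons rp rest ih =>
    obtain ⟨r, p⟩ := rp
    rintro tr pre cur ⟨h1, h2, h3, h4⟩ hnd hsub B hB
    obtain ⟨hFnd, hFmem⟩ := runOK_F _ r pre h1
    obtain ⟨hLnd, hLmem⟩ := runOK_L _ r pre h1
    simp only [mkBlocks, List.mem_cons] at hB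
    rcases hB with rfl | hB
    · rw [List.nodup_append]
      exact ⟨hnd, hFnd, fun x hx y hx2 hxy => hFmem y hx2 (hxy ▸ hsub x hx)⟩
    · refine ih tr _ (Lpart r ++ p.dedup) h4 ?_ ?_ B hB
      · rw [List.nodup_append]
        refine ⟨hLnd, p.nodup_dedup, ?_⟩
        intro x hx y hx2 hxy
        subst hxy
        have hxp : x ∈ p := (List.dedup_sublist p).subset hx2
        exact hLmem x hx (by simp [List.mem_append, hxp])
      · intro x hx
        rcases List.mem_append.1 hx with h | h
        · have : x ∈ runL r := Lpart_subset r x h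
          simp [List.mem_append, this]
        · have : x ∈ p := (List.dedup_sublist p).subset h
          simp [List.mem_append, this]

lemma shuffle_isDS (s q : ℕ) (hs : 3 ≤ s) :
    ∀ (segs : List (Run × List ℕ)) (tr : Run) (pre : List ℕ),
      SegsOK q pre segs tr → IsDS s (pre ++ flatRP segs tr) → IsDS s (pre ++ flatShuf segs tr) := by
  intro segs
  induction segs with
  | nil =>
    intro tr pre hok hDS
    obtain ⟨hFnd, hFmem⟩ := runOK_F [] tr pre hok
    obtain ⟨hLnd, hLmem⟩ := runOK_L [] tr pre hok
    have h := runperm_core s hs pre (Fpart tr) (Lpart tr) [] (runL tr)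
      hFnd hLnd hFmem (by simp) (Fpart_sublist_runL tr) (Lpart_sublist_runL tr)
      (by simpa [flatRP] using hDS)
    simpa [flatShuf] using h
  | cons rp rest ih =>
    obtain ⟨r, p⟩ := rp
    rintro tr pre ⟨h1, h2, h3, h4⟩ hDS
    obtain ⟨hFnd, hFmem⟩ := runOK_F _ r pre h1
    obtain ⟨hLnd, hLmem⟩ := runOK_L _ r pre h1
    have hstep := runperm_core s hs pre (Fpart r) (Lpart r) (p ++ flatRP rest tr) (runL r)
      hFnd hLnd hFmem hLmem (Fpart_sublist_runL r) (Lpart_sublist_runL r)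
      (by simpa [flatRP, List.append_assoc] using hDS)
    -- hstep : IsDS s (pre ++ (Fpart r ++ (Lpart r ++ (p ++ flatRP rest tr))))
    have hok' : SegsOK q (pre ++ Fpart r ++ Lpart r ++ p) rest tr := by
      refine segsOK_congr q rest tr (pre ++ runL r ++ p) _ ?_ h4
      intro x
      have hiff := (FL_perm r).mem_iff (a := x)
      simp only [List.mem_append] at *
      tauto
    have hDS' : IsDS s ((pre ++ Fpart r ++ Lpart r ++ p) ++ flatRP rest tr) := by
      simpa [List.append_assoc] using hstep
    have := ih tr (pre ++ Fpart r ++ Lpart r ++ p) hok' hDS'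
    simpa [flatShuf, List.append_assoc] using this

/-! ### piece bounds -/

lemma pieceOK_strong {q : ℕ} {pre post p : List ℕ} (h : PieceOK q pre post p) :
    ∀ x ∈ p, x ∈ pre ∧ x ∈ post := by
  obtain ⟨hne, hcard, helem⟩ := h
  have claim1 : ∀ i (hi : i < p.length), p[i] ∈ pre := by
    intro i
    induction i using Nat.strong_induction_on with
    | _ i ih =>
      intro hi
      have := (helem i hi).1
      rcases List.mem_append.1 this with h | h
      · exact h
      · obtain ⟨j, hj, hje⟩ := List.getElem_of_mem h
        rw [List.length_take] at hj
        have hj' : j < i := by omega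
        rw [List.getElem_take] at hje
        rw [← hje]
        exact ih j hj' (by omega)
  have claim2 : ∀ d i (hi : i < p.length), p.length - i ≤ d → p[i] ∈ post := by
    intro d
    induction d with
    | zero => intro i hi hd; omega
    | succ d ih =>
      intro i hi hd
      have := (helem i hi).2
      rcases List.mem_append.1 this with h | h
      · obtain ⟨j, hj, hje⟩ := List.getElem_of_mem h
        rw [List.length_drop] at hj
        rw [List.getElem_drop] at hje
        rw [← hje]
        exact ih (i+1+j) (by omega) (by omega)
      · exact h
  intro x hx
  obtain ⟨i, hi, rfl⟩ := List.getElem_of_mem hx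
  exact ⟨claim1 i hi, claim2 p.length i hi (by omega)⟩

lemma piece_bound (s q M : ℕ) (hs : 3 ≤ s)
    (hbound : ∀ p : List ℕ, p ≠ [] → Sparse2 p → IsDS (s-2) p → p.toFinset.card ≤ q →
      p.length ≤ M * p.toFinset.card) :
    ∀ (segs : List (Run × List ℕ)) (tr : Run) (pre : List ℕ) (S : List ℕ),
      IsDS s S → Sparse2 S → S = pre ++ flatRP segs tr → SegsOK q pre segs tr →
      numPL segs ≤ M * numN segs := by
  intro segs
  induction segs with
  | nil => intro tr pre S _ _ _ _; simp [numPL, numN]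
  | cons rp rest ih =>
    obtain ⟨r, p⟩ := rp
    rintro tr pre S hds hsp hSeq ⟨h1, h2, h3, h4⟩
    have hSeq' : S = (pre ++ runL r) ++ p ++ flatRP rest tr := by
      rw [hSeq]
      simp [flatRP, List.append_assoc]
    have hmid : ∀ x ∈ p, x ∈ pre ++ runL r ∧ x ∈ flatRP rest tr := pieceOK_strong h2
    have hdsp : IsDS (s-2) p := middle_isDS hs (by rw [← hSeq']; exact hds) hmid
    have hspp : Sparse2 p := by
      refine Sparse2.infix hsp ⟨pre ++ runL r, flatRP rest tr, ?_⟩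
      rw [hSeq']
    have hplen : p.length ≤ M * p.toFinset.card :=
      hbound p h2.1 hspp hdsp h2.2.1
    have hrest : numPL rest ≤ M * numN rest := by
      refine ih tr (pre ++ runL r ++ p) S hds hsp ?_ h4
      rw [hSeq]
      simp [flatRP, List.append_assoc]
    simp only [numPL, numN]
    calc p.length + numPL rest ≤ M * p.toFinset.card + M * numN rest :=
      Nat.add_le_add hplen hrest
      _ = M * (p.toFinset.card + numN rest) := by ring

lemma branchA_count (q n : ℕ) (segs : List (Run × List ℕ)) (tr : Run)
    (hok : SegsOK q [] segs tr)
    (hq1 : 1 ≤ q) (hqn : q ≤ n) (hn2 : 2 ≤ n)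
    (hc2n : numC segs tr ≤ 2 * n)
    (hNl : numN segs + numC segs tr ≤ q * n) :
    segs.length + 2 ≤ 3 * n - 1 := by
  match segs, hok with
  | [], hok => simp; omega
  | (r, p) :: rest, hok =>
    have hrne : r ≠ [] := first_run_ne q r p rest tr hok
    have hr1 : 1 ≤ r.length := List.length_pos_iff.2 hrne
    have hcaft : numCafter ((r,p) :: rest) tr + 1 ≤ numC ((r,p) :: rest) tr := by
      simp only [numCafter, numC]
      omega
    have hcm := count_main q ((r,p) :: rest) tr [] hok
    set T := ((r,p) :: rest).length with hT
    set caf := numCafter ((r,p) :: rest) tr with hcaf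
    set c := numC ((r,p) :: rest) tr with hc
    set N := numN ((r,p) :: rest) with hN
    obtain ⟨q1, hq1e⟩ : ∃ q1, q = q1 + 1 := ⟨q - 1, by omega⟩
    have hf2 : q * caf + q ≤ q * c := by
      have := Nat.mul_le_mul_left q hcaft
      rw [Nat.mul_add, Nat.mul_one] at this
      exact this
    have hf5 : q * c + 2 * q ≤ 2 * (q * n) + c := by
      have hA : c * q1 ≤ 2 * (n * q1) := by
        calc c * q1 ≤ (2 * n) * q1 := Nat.mul_le_mul_right _ hc2n
          _ = 2 * (n * q1) := by ring
      have ec : q * c = c * q1 + c := by rw [hq1e]; ring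
      have en : q * n = n * q1 + n := by rw [hq1e]; ring
      omega
    obtain ⟨m, hm⟩ : ∃ m, m + 1 = 3 * n := ⟨3 * n - 1, by omega⟩
    have hmeq : 3 * n - 1 = m := by omega
    rw [hmeq]
    have e6 : q * m + q = 3 * (q * n) := by
      have h' : q * (m + 1) = q * m + q := by ring
      rw [← h', hm]; ring
    have e7 : q * (T + 2) = q * T + 2 * q := by ring
    have hgoal : q * (T + 2) ≤ q * m := by omega
    exact Nat.le_of_mul_le_mul_left hgoal (by omega : 0 < q)

lemma branchB_count (q n : ℕ) (F : Finset ℕ) (segs : List (Run × List ℕ)) (tr : Run)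
    (hok : SegsOK q [] segs tr) (hsub : ∀ x ∈ flatRP segs tr, x ∈ F)
    (hFq : F.card ≤ q) (hn2 : 2 ≤ n) (hc2n : numC segs tr ≤ 2 * n) :
    segs.length + 2 ≤ 3 * n - 1 := by
  match segs, hok with
  | [], hok => simp; omega
  | (r, p) :: rest, hok =>
    have hrne : r ≠ [] := first_run_ne q r p rest tr hok
    have hr1 : 1 ≤ r.length := List.length_pos_iff.2 hrne
    have hnov := count_noover q F hFq ((r,p) :: rest) tr [] hok hsub
    have hcaft : numCafter ((r,p) :: rest) tr + 1 ≤ numC ((r,p) :: rest) tr := by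
      simp only [numCafter, numC]
      omega
    simp only [List.length_cons] at hnov ⊢
    omega

lemma flatten_singletons (S : List ℕ) : (S.map (fun x => [x])).flatten = S := by
  induction S with
  | nil => rfl
  | cons x t ih => simp [ih]

end DS7

open DS7

/-- For `s ≥ 3` and nondecreasing `γ_s, γ_{s−2}` with `λ_s(n) ≤ γ_s(n)·n` and
`λ_{s−2}(n) ≤ γ_{s−2}(n)·n` for all `n ≥ 1`, we have
`λ_s(n) ≤ γ_{s−2}(γ_s(n))·λ_s(n, 3n−1)` for all `n ≥ 1`. -/
theorem stmt7 (s : ℕ) (hs : 3 ≤ s) (γs γs2 : ℕ → ℕ)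
    (hγs : Monotone γs) (hγs2 : Monotone γs2)
    (h1 : ∀ n : ℕ, 1 ≤ n → lamS s n ≤ γs n * n)
    (h2 : ∀ n : ℕ, 1 ≤ n → lamS (s - 2) n ≤ γs2 n * n) :
    ∀ n : ℕ, 1 ≤ n → lamS s n ≤ γs2 (γs n) * lamB s n (3 * n - 1) := by
  intro n hn
  set K := γs n with hK
  set μ := γs2 K with hμ
  have hK1 : 1 ≤ K := by
    have := (one_le_lamS s 1 le_rfl).trans ((h1 1 le_rfl).trans_eq (mul_one _))
    exact this.trans (hγs hn)
  have hμ1 : 1 ≤ μ := by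
    have := (one_le_lamS (s-2) 1 le_rfl).trans ((h2 1 le_rfl).trans_eq (mul_one _))
    exact this.trans (hγs2 hK1)
  apply lamS_le
  intro S hds hsp hcard
  set l := S.length with hl
  set LB := lamB s n (3 * n - 1) with hLB
  by_cases hsmall : l ≤ 3 * n - 1
  · -- singleton blocks witness
    have hbl : Blocked (3 * n - 1) S := by
      refine ⟨S.map (fun x => [x]), by simpa using hsmall, ?_, (flatten_singletons S).symm⟩
      intro B hB
      rw [List.mem_map] at hB
      obtain ⟨x, _, rfl⟩ := hB
      simp
    have hle : l ≤ LB := le_lamB hds hcard hbl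
    calc l ≤ 1 * LB := by omega
      _ ≤ μ * LB := Nat.mul_le_mul_right _ hμ1
  · push_neg at hsmall
    have h3n : 3 * n ≤ l := by omega
    have hKn : l ≤ K * n := (le_lamS hds hsp hcard).trans (h1 n hn)
    set a := S.toFinset.card with ha
    have han : a ≤ n := hcard
    have ha2 : 2 ≤ a := by
      by_contra hc
      push_neg at hc
      have := sparse_card_le_one hsp (by omega)
      omega
    have hn2 : 2 ≤ n := le_trans ha2 han
    set ceil := (l + n - 1) / n with hceil
    set q := min ceil n with hq
    have hl1 : 1 ≤ l := by omega
    have hceil1 : 1 ≤ ceil := by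
      rw [hceil]
      rw [Nat.le_div_iff_mul_le (by omega : 0 < n)]
      omega
    have hq1 : 1 ≤ q := le_min hceil1 (by omega)
    have hceilK : ceil ≤ K := by
      have hlt : (l + n - 1) / n < K + 1 := by
        rw [Nat.div_lt_iff_lt_mul (by omega : 0 < n)]
        have : (K+1) * n = K * n + n := by ring
        omega
      omega
    have hqK : q ≤ K := le_trans (min_le_left _ _) hceilK
    -- build segmentation
    obtain ⟨segs, tr, hflat, hok⟩ := build q hq1 l S [] le_rfl
    set c := numC segs tr with hc
    set N := numN segs with hN
    set PL := numPL segs with hPL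
    set T := segs.length with hT
    have hlen : l = c + PL := by
      rw [hl, hflat]
      exact flatRP_length segs tr
    have hNle : N ≤ PL := numN_le_numPL segs
    -- c ≤ 2a
    have hc2a : c ≤ 2 * a := by
      have hF := allF_nodup q segs tr [] hok
      have hL := allL_nodup q segs tr [] hok
      have hFsub : ∀ x ∈ allF segs tr, x ∈ S.toFinset := by
        intro x hx
        rw [List.mem_toFinset, hflat]
        exact allF_subset_flat segs tr x hx
      have hLsub : ∀ x ∈ allL segs tr, x ∈ S.toFinset := by
        intro x hx
        rw [List.mem_toFinset, hflat]
        exact allL_subset_flat segs tr x hx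
      have h1' := nodup_card_le _ _ hF.1 hFsub
      have h2' := nodup_card_le _ _ hL hLsub
      rw [hc, numC_eq_FL]
      omega
    -- piece bound
    have hPLN : PL ≤ γs2 q * N := by
      refine piece_bound s q (γs2 q) hs ?_ segs tr [] S hds hsp (by simpa using hflat) hok
      intro p hpne hpsp hpds hpq
      have hp1 : 1 ≤ p.toFinset.card := by
        rcases p with _ | ⟨x, t⟩
        · exact absurd rfl hpne
        · have : x ∈ (x :: t).toFinset := by simp
          exact Finset.card_pos.2 ⟨x, this⟩
      calc p.length ≤ lamS (s-2) p.toFinset.card := le_lamS hpds hpsp le_rfl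
        _ ≤ γs2 p.toFinset.card * p.toFinset.card := h2 _ hp1
        _ ≤ γs2 q * p.toFinset.card := Nat.mul_le_mul_right _ (hγs2 hpq)
    -- witness
    set Bs := mkBlocks [] segs tr with hBs
    set W := Bs.flatten with hW
    have hWsub : W.Sublist (flatShuf segs tr) := by
      have := mkBlocks_flatten_sublist segs tr []
      simpa using this
    have hWds : IsDS s W := by
      have hshuf : IsDS s ([] ++ flatShuf segs tr) := by
        refine shuffle_isDS s q hs segs tr [] hok ?_
        rw [List.nil_append, ← hflat]
        exact hds
      rw [List.nil_append] at hshuf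
      exact DS7.IsDS.sublist hshuf hWsub
    have hWcard : W.toFinset.card ≤ n := by
      refine le_trans (Finset.card_le_card ?_) hcard
      intro x hx
      rw [List.mem_toFinset] at hx ⊢
      have hx2 : x ∈ flatShuf segs tr := hWsub.subset hx
      have := (flatShuf_perm segs tr).mem_iff.1 hx2
      rw [← hflat] at this
      exact this
    have hWlen : W.length = c + N := by
      have h' := mkBlocks_flatten_length segs tr []
      rw [hW, hBs, h', hc, hN]
      simp
    -- block count
    have hTcount : T + 2 ≤ 3 * n - 1 := by
      have hc2n : numC segs tr ≤ 2 * n := by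
        rw [← hc]; omega
      by_cases hbig : ceil ≤ n
      · have hqceil : q = ceil := min_eq_left hbig
        have hlqn : l ≤ q * n := by
          rw [hqceil, hceil, Nat.mul_comm]
          have hmod := Nat.div_add_mod (l + n - 1) n
          have hmlt : (l + n - 1) % n < n := Nat.mod_lt _ (by omega)
          omega
        have hNl : numN segs + numC segs tr ≤ q * n := by
          rw [← hN, ← hc]
          omega
        exact branchA_count q n segs tr hok hq1 (min_le_right _ _) hn2 hc2n hNl
      · push_neg at hbig
        have hnq : a ≤ q := by
          have : q = n := min_eq_right (by omega)
          omega
        exact branchB_count q n S.toFinset segs tr hok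
          (by intro x hx; rw [List.mem_toFinset, hflat]; exact hx) hnq hn2 hc2n
    have hblocked : Blocked (3 * n - 1) W := by
      refine ⟨Bs, ?_, ?_, rfl⟩
      · rw [hBs, mkBlocks_length]
        exact hTcount
      · exact mkBlocks_nodup q segs tr [] [] hok (by simp) (by simp)
    have hWLB : W.length ≤ LB := le_lamB hWds hWcard hblocked
    -- final chain
    have hγq : γs2 q ≤ μ := hγs2 hqK
    calc l = c + PL := hlen
      _ ≤ c + γs2 q * N := by omega
      _ ≤ μ * c + μ * N := by
        have h1' : c ≤ μ * c := Nat.le_mul_of_pos_left c (by omega)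
        have h2' : γs2 q * N ≤ μ * N := Nat.mul_le_mul_right _ hγq
        omega
      _ = μ * (c + N) := by ring
      _ = μ * W.length := by rw [hWlen]
      _ ≤ μ * LB := Nat.mul_le_mul_left _ hWLB
end
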